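/- arXiv:1006.5058 — 5 statements merged into one kernel-verified Lean document; each statement's English description precedes it below -/
import Mathlib

section
/- A non-archimedean Polish group G is extremely amenable if and only if every continuous action of G on the Cantor space {0,1}^ℕ has a fixed point. -/
open scoped Classical

namespace CantorAux

variable (C : Set (ℕ → Bool))

/-- first `n` bits of `x` as a list -/
def Pfx (x : ℕ → Bool) (n : ℕ) : List Bool := (List.range n).map x

/-- `s` is a prefix of some member of `C` -/
def Tn (s : List Bool) : Prop := ∃ c ∈ C, Pfx c s.length = s

def Br (s : List Bool) : Prop := Tn C (s ++ [false]) ∧ Tn C (s ++ [true])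

/-- decoding walk: state after `n` steps = (current node, number of consumed bits) -/
noncomputable def st (x : ℕ → Bool) : ℕ → List Bool × ℕ
  | 0 => ([], 0)
  | n+1 =>
    let p := st x n
    if Br C p.1 then (p.1 ++ [x p.2], p.2 + 2)
    else (p.1 ++ [if Tn C (p.1 ++ [true]) then true else false], p.2)

noncomputable def dc (x : ℕ → Bool) : ℕ → Bool := fun n => ((st C x (n+1)).1).getD n false

def Reach (x : ℕ → Bool) (k : ℕ) : Prop := ∃ n, (st C x n).2 = 2*k

noncomputable def Mj (x : ℕ → Bool) (j : ℕ) : ℕ := Nat.findGreatest (fun k => Reach C x k) (j+1)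

noncomputable def dy (x : ℕ → Bool) : ℕ → Bool := fun j => x (j + Mj C x j)

/-- number of branchings among the first `n` prefixes of `c` -/
noncomputable def cc (c : ℕ → Bool) : ℕ → ℕ
  | 0 => 0
  | n+1 => cc c n + (if Br C (Pfx c n) then 1 else 0)

def ccReach (c : ℕ → Bool) (k : ℕ) : Prop := ∃ n, cc C c n = k

noncomputable def MJ (c : ℕ → Bool) (j : ℕ) : ℕ := Nat.findGreatest (ccReach C c) (j+1)

noncomputable def en (c y : ℕ → Bool) : ℕ → Bool := fun i =>
  if h : ccReach C c (i/2 + 1) then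
    (if i % 2 = 0 then c (Nat.find h - 1) else y (i/2))
  else y (i - MJ C c (i/2))

variable {C}

lemma Pfx_length (x : ℕ → Bool) (n : ℕ) : (Pfx x n).length = n := by simp [Pfx]

lemma Pfx_succ (x : ℕ → Bool) (n : ℕ) : Pfx x (n+1) = Pfx x n ++ [x n] := by
  simp [Pfx, List.range_succ]

lemma Pfx_eq_iff {a b : ℕ → Bool} {n : ℕ} : Pfx a n = Pfx b n ↔ ∀ i < n, a i = b i := by
  constructor
  · intro h i hi
    have := congrArg (fun l => l.getD i false) h
    simpa [Pfx, List.getD_eq_getElem?_getD, hi] using this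
  · intro h
    simp only [Pfx]
    exact List.map_congr_left (fun i hi => h i (List.mem_range.mp hi))

lemma st_len (x : ℕ → Bool) : ∀ n, (st C x n).1.length = n := by
  intro n; induction n with
  | zero => rfl
  | succ n ih => rw [st]; split <;> simp [ih]

lemma dc_spec (x : ℕ → Bool) (n : ℕ) :
    (st C x (n+1)).1 = (st C x n).1 ++ [dc C x n] := by
  have hlen := st_len x (C := C) n
  have : ∃ b, (st C x (n+1)).1 = (st C x n).1 ++ [b] := by
    rw [st]; split <;> exact ⟨_, rfl⟩
  obtain ⟨b, hb⟩ := this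
  have : dc C x n = b := by
    simp [dc, hb, List.getD_eq_getElem?_getD, List.getElem?_append_right, hlen]
  rw [this, hb]

lemma Pfx_dc (x : ℕ → Bool) : ∀ n, Pfx (dc C x) n = (st C x n).1 := by
  intro n; induction n with
  | zero => rfl
  | succ n ih => rw [Pfx_succ, ih, dc_spec]

lemma Tn_of_mem {c : ℕ → Bool} (hc : c ∈ C) (n : ℕ) : Tn C (Pfx c n) :=
  ⟨c, hc, by rw [Pfx_length]⟩

lemma Tn_ext {s : List Bool} (h : Tn C s) : ∃ b, Tn C (s ++ [b]) := by
  obtain ⟨c, hc, hpre⟩ := h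
  refine ⟨c s.length, c, hc, ?_⟩
  have : (s ++ [c s.length]).length = s.length + 1 := by simp
  rw [this, Pfx_succ, hpre]

lemma st_Tn (hne : C.Nonempty) (x : ℕ → Bool) : ∀ n, Tn C (st C x n).1 := by
  intro n; induction n with
  | zero =>
    obtain ⟨c, hc⟩ := hne
    exact ⟨c, hc, rfl⟩
  | succ n ih =>
    rw [st]
    split
    · next hbr =>
      cases hx : x (st C x n).2
      · exact hbr.1
      · exact hbr.2
    · next hbr =>
      by_cases ht : Tn C ((st C x n).1 ++ [true])
      · simp only [ht, if_true]
      · obtain ⟨b, hb⟩ := Tn_ext ih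
        have hbf : b = false := by
          cases b
          · rfl
          · exact absurd hb ht
        rw [hbf] at hb
        simp only [ht, if_false]
        exact hb


lemma dc_mem (hC : IsClosed C) (hne : C.Nonempty) (x : ℕ → Bool) : dc C x ∈ C := by
  have hT := st_Tn hne x
  choose seq hseq hpre using hT
  refine hC.mem_of_tendsto (f := seq) (b := Filter.atTop) ?_ (Filter.Eventually.of_forall hseq)
  rw [tendsto_pi_nhds]
  intro i
  have : ∀ n, i < n → seq n i = dc C x i := by
    intro n hn
    have h1 : Pfx (seq n) n = Pfx (dc C x) n := by
      rw [Pfx_dc]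
      have := hpre n
      rwa [st_len] at this
    exact Pfx_eq_iff.mp h1 i hn
  refine (tendsto_const_nhds (x := dc C x i)).congr' ?_
  filter_upwards [Filter.eventually_gt_atTop i] with n hn
  exact (this n hn).symm

lemma st_pos_le (x : ℕ → Bool) : ∀ n, (st C x n).2 ≤ 2*n := by
  intro n; induction n with
  | zero => exact Nat.le_refl 0
  | succ n ih => rw [st]; split <;> simp <;> omega

lemma st_congr {x x' : ℕ → Bool} : ∀ n, (∀ i < 2*n, x i = x' i) → st C x n = st C x' n := by
  intro n; induction n with
  | zero => intro _; rfl
  | succ n ih =>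
    intro h
    have hst := ih (fun i hi => h i (by omega))
    have hx : x (st C x n).2 = x' (st C x n).2 :=
      h _ (by have := st_pos_le x (C := C) n; omega)
    rw [st, st, ← hst, ← hx]

lemma st_pos_succ (x : ℕ → Bool) (n : ℕ) :
    (st C x (n+1)).2 = (st C x n).2 + 2 ∨ (st C x (n+1)).2 = (st C x n).2 := by
  rw [st]; split
  · left; rfl
  · right; rfl

lemma st_pos_mono (x : ℕ → Bool) {m n : ℕ} (h : m ≤ n) : (st C x m).2 ≤ (st C x n).2 := by
  induction n with
  | zero => have : m = 0 := by omega
            rw [this]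
  | succ n ih =>
    rcases Nat.lt_or_ge m (n+1) with h1 | h1
    · have := ih (by omega)
      rcases st_pos_succ x (C := C) n with h2 | h2 <;> omega
    · have : m = n + 1 := by omega
      rw [this]

lemma st_pos_even (x : ℕ → Bool) : ∀ n, ∃ k, (st C x n).2 = 2*k := by
  intro n; induction n with
  | zero => exact ⟨0, rfl⟩
  | succ n ih =>
    obtain ⟨k, hk⟩ := ih
    rcases st_pos_succ x (C := C) n with h2 | h2
    · exact ⟨k+1, by omega⟩
    · exact ⟨k, by omega⟩

lemma reach_of_le' {x : ℕ → Bool} {k : ℕ} :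
    ∀ n, 2*k ≤ (st C x n).2 → Reach C x k := by
  intro n; induction n with
  | zero => intro h
            have h0 : (st C x 0).2 = 0 := rfl
            rw [h0] at h
            have : k = 0 := by omega
            exact this ▸ ⟨0, rfl⟩
  | succ n ih =>
    intro h
    rcases Nat.lt_or_ge ((st C x n).2) (2*k) with h1 | h1
    · rcases st_pos_succ x (C := C) n with h2 | h2
      · obtain ⟨k', hk'⟩ := st_pos_even x (C := C) n
        have : (st C x (n+1)).2 = 2*k := by omega
        exact ⟨n+1, this⟩
      · omega
    · exact ih h1

lemma reach_zero (x : ℕ → Bool) : Reach C x 0 := ⟨0, rfl⟩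

lemma Mj_spec (x : ℕ → Bool) (j : ℕ) : Reach C x (Mj C x j) :=
  Nat.findGreatest_spec (Nat.zero_le _) (reach_zero x)

lemma Mj_of_reach {x : ℕ → Bool} {j : ℕ} (h : Reach C x (j+1)) : Mj C x j = j+1 :=
  le_antisymm (Nat.findGreatest_le _) (Nat.le_findGreatest le_rfl h)

lemma pos_bound_of_not_reach {x : ℕ → Bool} {j : ℕ} (h : ¬ Reach C x (j+1)) :
    (∀ n, (st C x n).2 ≤ 2 * Mj C x j) ∧ Mj C x j ≤ j := by
  have hle : Mj C x j ≤ j := by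
    have h1 : Mj C x j ≤ j + 1 := Nat.findGreatest_le _
    rcases Nat.lt_or_ge (Mj C x j) (j+1) with h2 | h2
    · omega
    · exfalso
      have he : Mj C x j = j + 1 := by omega
      exact h (he ▸ Mj_spec x j)
  refine ⟨fun n => ?_, hle⟩
  by_contra hgt
  push_neg at hgt
  obtain ⟨k', hk'⟩ := st_pos_even x (C := C) n
  have hr : Reach C x (Mj C x j + 1) := reach_of_le' n (by omega)
  have h2 : Mj C x j + 1 ≤ j + 1 := by omega
  have : Mj C x j + 1 ≤ Mj C x j := Nat.le_findGreatest h2 hr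
  omega

lemma cc_mono (c : ℕ → Bool) {m n : ℕ} (h : m ≤ n) : cc C c m ≤ cc C c n := by
  induction n with
  | zero => have : m = 0 := by omega
            rw [this]
  | succ n ih =>
    rcases Nat.lt_or_ge m (n+1) with h1 | h1
    · have := ih (by omega)
      rw [cc]; split <;> omega
    · have : m = n + 1 := by omega
      rw [this]

lemma ccReach_of_le' {c : ℕ → Bool} {k : ℕ} :
    ∀ n, k ≤ cc C c n → ccReach C c k := by
  intro n; induction n with
  | zero => intro h; rw [cc] at h
            have : k = 0 := by omega
            exact this ▸ ⟨0, rfl⟩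
  | succ n ih =>
    intro h
    rcases Nat.lt_or_ge (cc C c n) k with h1 | h1
    · have h2 : cc C c (n+1) = k := by rw [cc] at h ⊢; split at h <;> [skip; omega] <;> split <;> omega
      exact ⟨n+1, h2⟩
    · exact ih h1

lemma ccReach_zero (c : ℕ → Bool) : ccReach C c 0 := ⟨0, rfl⟩

lemma MJ_spec (c : ℕ → Bool) (j : ℕ) : ccReach C c (MJ C c j) :=
  Nat.findGreatest_spec (Nat.zero_le _) (ccReach_zero c)

lemma MJ_of_reach {c : ℕ → Bool} {j : ℕ} (h : ccReach C c (j+1)) : MJ C c j = j+1 :=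
  le_antisymm (Nat.findGreatest_le _) (Nat.le_findGreatest le_rfl h)

lemma cc_bound_of_not_reach {c : ℕ → Bool} {j : ℕ} (h : ¬ ccReach C c (j+1)) :
    (∀ n, cc C c n ≤ MJ C c j) ∧ MJ C c j ≤ j := by
  have hle : MJ C c j ≤ j := by
    have h1 : MJ C c j ≤ j + 1 := Nat.findGreatest_le _
    rcases Nat.lt_or_ge (MJ C c j) (j+1) with h2 | h2
    · omega
    · exfalso
      have he : MJ C c j = j + 1 := by omega
      exact h (he ▸ MJ_spec c j)
  refine ⟨fun n => ?_, hle⟩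
  by_contra hgt
  push_neg at hgt
  have hr : ccReach C c (MJ C c j + 1) := ccReach_of_le' n (by omega)
  have h2 : MJ C c j + 1 ≤ j + 1 := by omega
  have : MJ C c j + 1 ≤ MJ C c j := Nat.le_findGreatest h2 hr
  omega

lemma MJ_stable {c : ℕ → Bool} {m j : ℕ} (hbd : ∀ n, cc C c n ≤ m)
    (hm : ccReach C c m) (hj : m ≤ j + 1) : MJ C c j = m := by
  refine le_antisymm ?_ (Nat.le_findGreatest hj hm)
  obtain ⟨n, hn⟩ := MJ_spec c (C := C) j
  rw [← hn]; exact hbd n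

lemma pos_eq_cc (x : ℕ → Bool) : ∀ n, (st C x n).2 = 2 * cc C (dc C x) n := by
  intro n; induction n with
  | zero => rfl
  | succ n ih =>
    have hbr : Br C (Pfx (dc C x) n) ↔ Br C (st C x n).1 := by rw [Pfx_dc]
    rw [st, cc]
    by_cases h : Br C (st C x n).1
    · have h2 : Br C (Pfx (dc C x) n) := hbr.mpr h
      simp only [h, if_true, h2]
      omega
    · have h2 : ¬ Br C (Pfx (dc C x) n) := by simpa [hbr] using h
      simp only [h, if_false, h2]
      omega


lemma cc_succ_br {c : ℕ → Bool} {n : ℕ} (h : Br C (Pfx c n)) :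
    cc C c (n+1) = cc C c n + 1 := by rw [cc]; simp [h]

lemma cc_succ_nbr {c : ℕ → Bool} {n : ℕ} (h : ¬ Br C (Pfx c n)) :
    cc C c (n+1) = cc C c n := by rw [cc]; simp [h]

lemma st_en {c y : ℕ → Bool} (hT : ∀ n, Tn C (Pfx c n)) :
    ∀ n, st C (en C c y) n = (Pfx c n, 2 * cc C c n) := by
  intro n; induction n with
  | zero => rfl
  | succ n ih =>
    rw [st, ih]
    by_cases hbr : Br C (Pfx c n)
    · simp only [hbr, if_true]
      have hkey : en C c y (2 * cc C c n) = c n := by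
        set j := cc C c n with hj
        have hdiv : (2*j)/2 = j := by omega
        have hmod : (2*j) % 2 = 0 := by omega
        have hcc1 : cc C c (n+1) = j + 1 := cc_succ_br hbr
        have hex : ccReach C c ((2*j)/2 + 1) := by rw [hdiv]; exact ⟨n+1, hcc1⟩
        rw [en]
        rw [dif_pos hex, if_pos hmod]
        have hfind : Nat.find hex = n + 1 := by
          rw [Nat.find_eq_iff hex]
          refine ⟨by rw [hdiv]; exact hcc1, ?_⟩
          intro m hm
          have : cc C c m ≤ cc C c n := cc_mono c (by omega)
          rw [hdiv]; omega
        rw [hfind]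
        simp
      rw [hkey, ← Pfx_succ]
      have h2 : 2 * cc C c (n + 1) = 2 * cc C c n + 2 := by rw [cc_succ_br hbr]; ring
      rw [h2]
    · simp only [hbr, if_false]
      have hcn : (if Tn C (Pfx c n ++ [true]) then true else false) = c n := by
        have h1 : Tn C (Pfx c n ++ [c n]) := by
          have := hT (n+1); rwa [Pfx_succ] at this
        cases hcb : c n
        · rw [hcb] at h1
          have h2 : ¬ Tn C (Pfx c n ++ [true]) := fun ht => hbr ⟨h1, ht⟩
          simp [h2]
        · rw [hcb] at h1
          simp [h1]
      rw [hcn, ← Pfx_succ, ← cc_succ_nbr hbr]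

lemma dc_en {c y : ℕ → Bool} (hT : ∀ n, Tn C (Pfx c n)) : dc C (en C c y) = c := by
  funext i
  have h1 : Pfx (dc C (en C c y)) (i+1) = Pfx c (i+1) := by
    rw [Pfx_dc, st_en hT]
  exact Pfx_eq_iff.mp h1 i (by omega)

lemma reach_en_iff {c y : ℕ → Bool} (hT : ∀ n, Tn C (Pfx c n)) (k : ℕ) :
    Reach C (en C c y) k ↔ ccReach C c k := by
  constructor
  · rintro ⟨n, hn⟩
    rw [st_en hT] at hn
    exact ⟨n, by omega⟩
  · rintro ⟨n, hn⟩
    exact ⟨n, by rw [st_en hT]; omega⟩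

lemma Mj_en_eq_MJ {c y : ℕ → Bool} (hT : ∀ n, Tn C (Pfx c n)) (j : ℕ) :
    Mj C (en C c y) j = MJ C c j := by
  unfold Mj MJ
  congr 1
  funext k
  exact propext (reach_en_iff hT k)

lemma dy_en {c y : ℕ → Bool} (hT : ∀ n, Tn C (Pfx c n)) : dy C (en C c y) = y := by
  funext j
  rw [dy]
  by_cases hr : ccReach C c (j+1)
  · have hMj : Mj C (en C c y) j = j + 1 := by
      rw [Mj_en_eq_MJ hT]; exact MJ_of_reach hr
    rw [hMj, en]
    have hdiv : (j + (j+1))/2 = j := by omega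
    have hmod : (j + (j+1)) % 2 = 1 := by omega
    rw [dif_pos (by rw [hdiv]; exact hr), if_neg (by omega), hdiv]
  · obtain ⟨hbd, hlej⟩ := cc_bound_of_not_reach hr
    set m := MJ C c j with hm
    have hMj : Mj C (en C c y) j = m := by rw [Mj_en_eq_MJ hT]
    rw [hMj, en]
    have hdivge : m ≤ (j + m)/2 := by omega
    have hdivle : (j + m)/2 ≤ j := by omega
    have hnr : ¬ ccReach C c ((j+m)/2 + 1) := by
      rintro ⟨n, hn⟩
      have := hbd n
      omega
    rw [dif_neg hnr]
    have hMJ2 : MJ C c ((j+m)/2) = m := MJ_stable hbd (MJ_spec c j) (by omega)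
    rw [hMJ2]
    congr 1
    omega

lemma en_dc_dy (x : ℕ → Bool) : en C (dc C x) (dy C x) = x := by
  set c := dc C x with hc
  have hpos : ∀ n, (st C x n).2 = 2 * cc C c n := pos_eq_cc x
  have hRiff : ∀ k, ccReach C c k ↔ Reach C x k := by
    intro k
    constructor
    · rintro ⟨n, hn⟩; exact ⟨n, by rw [hpos]; omega⟩
    · rintro ⟨n, hn⟩; rw [hpos] at hn; exact ⟨n, by omega⟩
  have hMeq : ∀ j, MJ C c j = Mj C x j := by
    intro j; unfold MJ Mj; congr 1; funext k; exact propext (hRiff k)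
  funext i
  rw [en]
  by_cases h : ccReach C c (i/2 + 1)
  · rw [dif_pos h]
    by_cases hpar : i % 2 = 0
    · rw [if_pos hpar]
      set n₁ := Nat.find h with hn₁
      have hcc1 : cc C c n₁ = i/2 + 1 := Nat.find_spec h
      have hpos1 : 1 ≤ n₁ := by
        rcases Nat.eq_zero_or_pos n₁ with h0 | h0
        · exfalso; rw [h0] at hcc1; exact absurd hcc1 (by rw [cc]; omega)
        · exact h0
      have hmin : cc C c (n₁ - 1) ≠ i/2 + 1 := fun hcontra =>
        Nat.find_min h (by omega) hcontra
      have hmono : cc C c (n₁ - 1) ≤ cc C c n₁ := cc_mono c (by omega)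
      have hstep : cc C c (n₁ - 1 + 1) = cc C c n₁ := by congr 1; omega
      have hbig : cc C c (n₁ - 1) + 1 = cc C c n₁ ∧ Br C (Pfx c (n₁ - 1)) := by
        by_cases hbr : Br C (Pfx c (n₁ - 1))
        · have := cc_succ_br hbr
          rw [hstep] at this
          exact ⟨by omega, hbr⟩
        · have := cc_succ_nbr hbr
          rw [hstep] at this
          exfalso; exact hmin (by omega)
      have hccm : cc C c (n₁ - 1) = i/2 := by omega
      -- the walk at step n₁ - 1 : branching, so dc bit = x (pos)
      have hbr' : Br C (st C x (n₁ - 1)).1 := by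
        rw [← Pfx_dc]; exact hbig.2
      have hwalk := dc_spec x (C := C) (n₁ - 1)
      have hwalk2 : (st C x (n₁ - 1 + 1)).1 = (st C x (n₁ - 1)).1 ++ [x ((st C x (n₁ - 1)).2)] := by
        rw [st]; simp only [hbr', if_true]
      have hbit : dc C x (n₁ - 1) = x ((st C x (n₁ - 1)).2) := by
        have := hwalk.symm.trans hwalk2
        simpa using this
      have : c (n₁ - 1) = x i := by
        show dc C x (n₁ - 1) = x i
        rw [hbit, hpos, hccm]
        congr 1
        omega
      rw [this]
    · rw [if_neg hpar]
      have hMj : Mj C x (i/2) = i/2 + 1 := Mj_of_reach ((hRiff _).mp h)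
      rw [dy, hMj]
      congr 1
      omega
  · rw [dif_neg h]
    obtain ⟨hbd, hlej⟩ := cc_bound_of_not_reach h
    set m := MJ C c (i/2) with hm
    have him : 2*m ≤ i := by omega
    rw [dy]
    have hbd' : ∀ n, (st C x n).2 ≤ 2*m := by
      intro n; rw [hpos]; have := hbd n; omega
    have hreachm : Reach C x m := (hRiff m).mp (MJ_spec c (i/2))
    have hMj2 : Mj C x (i - m) = m := by
      refine le_antisymm ?_ (Nat.le_findGreatest (by omega) hreachm)
      obtain ⟨n, hn⟩ := Mj_spec x (C := C) (i - m)
      have := hbd' n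
      omega
    rw [hMj2]
    congr 1
    omega


lemma cyl_mem_nhds (x : ℕ → Bool) (n : ℕ) : {y : ℕ → Bool | ∀ i < n, y i = x i} ∈ nhds x := by
  have heq : {y : ℕ → Bool | ∀ i < n, y i = x i}
      = ⋂ i ∈ Finset.range n, (fun y : ℕ → Bool => y i) ⁻¹' {x i} := by
    ext y; simp [Finset.mem_range]
  rw [heq]
  exact (isOpen_biInter_finset (fun i _ =>
    (continuous_apply i).isOpen_preimage _ (isOpen_discrete _))).mem_nhds (by simp)

lemma st_congr_forever {x x' : ℕ → Bool} {n₀ : ℕ}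
    (hnb : ∀ k, n₀ ≤ k → ¬ Br C (st C x k).1)
    (h : ∀ i < 2*n₀, x' i = x i) : ∀ n, st C x' n = st C x n := by
  have hbase : st C x' n₀ = st C x n₀ := st_congr n₀ h
  intro n
  rcases Nat.lt_or_ge n n₀ with h1 | h1
  · exact st_congr n (fun i hi => h i (by omega))
  · clear hbase
    induction n with
    | zero =>
      have : n₀ = 0 := by omega
      exact st_congr 0 (fun i hi => h i (by omega))
    | succ n ih =>
      rcases Nat.lt_or_ge n n₀ with h2 | h2
      · have : n₀ = n + 1 := by omega
        exact this ▸ st_congr n₀ h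
      · have hih := ih h2
        have hnb' : ¬ Br C (st C x n).1 := hnb n h2
        rw [st, st, hih]
        simp only [hnb', if_false]

lemma no_branch_after {x : ℕ → Bool} {j : ℕ} (h : ¬ Reach C x (j+1)) :
    ∃ n₀, ∀ k, n₀ ≤ k → ¬ Br C (st C x k).1 := by
  obtain ⟨hbd, _⟩ := pos_bound_of_not_reach h
  obtain ⟨n₀, hn₀⟩ := Mj_spec x (C := C) j
  refine ⟨n₀, fun k hk hbr => ?_⟩
  have h1 : (st C x (k+1)).2 = (st C x k).2 + 2 := by
    rw [st]; simp only [hbr, if_true]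
  have h2 : (st C x n₀).2 ≤ (st C x k).2 := st_pos_mono x hk
  have := hbd (k+1)
  omega

lemma cont_dc : Continuous (fun x => dc C x) := by
  apply continuous_pi
  intro i
  rw [continuous_iff_continuousAt]
  intro x₀
  have hev : (fun x => dc C x i) =ᶠ[nhds x₀] (fun _ => dc C x₀ i) := by
    filter_upwards [cyl_mem_nhds x₀ (2*(i+1))] with x' hx'
    show dc C x' i = dc C x₀ i
    have : st C x' (i+1) = st C x₀ (i+1) := st_congr (i+1) hx'
    unfold dc
    rw [this]
  exact continuousAt_const.congr hev.symm

lemma cont_dy : Continuous (fun x => dy C x) := by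
  apply continuous_pi
  intro j
  rw [continuous_iff_continuousAt]
  intro x₀
  by_cases hr : Reach C x₀ (j+1)
  · obtain ⟨n, hn⟩ := hr
    have hev : (fun x => dy C x j) =ᶠ[nhds x₀] (fun x => x (j + (j+1))) := by
      filter_upwards [cyl_mem_nhds x₀ (2*n)] with x' hx'
      show dy C x' j = x' (j + (j+1))
      have hst : st C x' n = st C x₀ n := st_congr n hx'
      have hr' : Reach C x' (j+1) := ⟨n, by rw [hst]; exact hn⟩
      rw [dy, Mj_of_reach hr']
    exact ((continuous_apply (j + (j+1))).continuousAt).congr hev.symm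
  · obtain ⟨n₀, hnb⟩ := no_branch_after hr
    set m := Mj C x₀ j with hm
    have hev : (fun x => dy C x j) =ᶠ[nhds x₀] (fun x => x (j + m)) := by
      filter_upwards [cyl_mem_nhds x₀ (2*n₀)] with x' hx'
      show dy C x' j = x' (j + m)
      have hst : ∀ n, st C x' n = st C x₀ n := st_congr_forever hnb hx'
      have hRiff : ∀ k, Reach C x' k ↔ Reach C x₀ k := by
        intro k; constructor
        · rintro ⟨n, hn⟩; exact ⟨n, by rw [← hst]; exact hn⟩
        · rintro ⟨n, hn⟩; exact ⟨n, by rw [hst]; exact hn⟩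
      have : Mj C x' j = Mj C x₀ j := by
        unfold Mj; congr 1; funext k; exact propext (hRiff k)
      rw [dy, this]
    exact ((continuous_apply (j + m)).continuousAt).congr hev.symm

lemma cc_congr {c c' : ℕ → Bool} : ∀ n, (∀ k < n, c' k = c k) → cc C c' n = cc C c n := by
  intro n; induction n with
  | zero => intro _; rfl
  | succ n ih =>
    intro h
    have h1 := ih (fun k hk => h k (by omega))
    have h2 : Pfx c' n = Pfx c n := Pfx_eq_iff.mpr (fun i hi => h i (by omega))
    rw [cc, cc, h1, h2]

lemma no_cbranch_after {c : ℕ → Bool} {j : ℕ} (h : ¬ ccReach C c (j+1)) :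
    ∃ n₀, cc C c n₀ = MJ C c j ∧ ∀ k, n₀ ≤ k → ¬ Br C (Pfx c k) := by
  obtain ⟨hbd, _⟩ := cc_bound_of_not_reach h
  obtain ⟨n₀, hn₀⟩ := MJ_spec c (C := C) j
  refine ⟨n₀, hn₀, fun k hk hbr => ?_⟩
  have h1 : cc C c (k+1) = cc C c k + 1 := cc_succ_br hbr
  have h2 : cc C c n₀ ≤ cc C c k := cc_mono c hk
  have := hbd (k+1)
  omega

lemma forced_path {c c' : ℕ → Bool} {n₀ : ℕ} (hc : c ∈ C) (hc' : c' ∈ C)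
    (hnb : ∀ k, n₀ ≤ k → ¬ Br C (Pfx c k)) (hpre : ∀ k < n₀, c' k = c k) : c' = c := by
  have key : ∀ n, ∀ i < n₀ + n, c' i = c i := by
    intro n; induction n with
    | zero => intro i hi; exact hpre i (by omega)
    | succ n ih =>
      intro i hi
      rcases Nat.lt_or_ge i (n₀ + n) with h1 | h1
      · exact ih i h1
      · have hik : i = n₀ + n := by omega
        have hPfx : Pfx c' i = Pfx c i := Pfx_eq_iff.mpr (fun k hk => ih k (by omega))
        have h1' : Tn C (Pfx c i ++ [c' i]) := by
          have := Tn_of_mem hc' (i+1)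
          rwa [Pfx_succ, hPfx] at this
        have h2' : Tn C (Pfx c i ++ [c i]) := by
          have := Tn_of_mem hc (i+1)
          rwa [Pfx_succ] at this
        by_contra hne
        have hbr : Br C (Pfx c i) := by
          cases hb : c i
          · cases hb' : c' i
            · exact absurd (hb' ▸ hb ▸ rfl) hne
            · rw [hb] at h2'; rw [hb'] at h1'; exact ⟨h2', h1'⟩
          · cases hb' : c' i
            · rw [hb] at h2'; rw [hb'] at h1'; exact ⟨h1', h2'⟩
            · exact absurd (hb' ▸ hb ▸ rfl) hne
        exact hnb i (by omega) hbr
  funext i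
  exact key (i+1) i (by omega)

lemma cont_en : Continuous (fun p : ↑C × (ℕ → Bool) => en C p.1.val p.2) := by
  apply continuous_pi
  intro i
  rw [continuous_iff_continuousAt]
  rintro ⟨⟨c₀, hc₀⟩, y₀⟩
  set j := i / 2 with hj
  have hval : Continuous (fun p : ↑C × (ℕ → Bool) => p.1.val) :=
    continuous_subtype_val.comp continuous_fst
  by_cases h : ccReach C c₀ (j+1)
  · set n₁ := Nat.find h with hn₁
    have hnbhd : {p : ↑C × (ℕ → Bool) | ∀ k < n₁ + 1, p.1.val k = c₀ k} ∈
        nhds (⟨⟨c₀, hc₀⟩, y₀⟩ : ↑C × (ℕ → Bool)) := by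
      have := hval.continuousAt (x := (⟨⟨c₀, hc₀⟩, y₀⟩ : ↑C × (ℕ → Bool))) (cyl_mem_nhds c₀ (n₁+1))
      exact this
    have hkey : ∀ p : ↑C × (ℕ → Bool), (∀ k < n₁ + 1, p.1.val k = c₀ k) →
        en C p.1.val p.2 i = (if i % 2 = 0 then p.1.val (n₁ - 1) else p.2 j) := by
      intro p hp
      have hcceq : ∀ n ≤ n₁, cc C p.1.val n = cc C c₀ n := fun n hn =>
        cc_congr n (fun k hk => hp k (by omega))
      have h' : ccReach C p.1.val (j+1) :=
        ⟨n₁, by rw [hcceq n₁ le_rfl]; exact Nat.find_spec h⟩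
      have hfind : Nat.find h' = n₁ := by
        rw [Nat.find_eq_iff h']
        refine ⟨by rw [hcceq n₁ le_rfl]; exact Nat.find_spec h, ?_⟩
        intro m hm hcontra
        rw [hcceq m (by omega)] at hcontra
        exact Nat.find_min h hm hcontra
      rw [en, dif_pos h', hfind]
    by_cases hpar : i % 2 = 0
    · have hev : (fun p : ↑C × (ℕ → Bool) => en C p.1.val p.2 i)
          =ᶠ[nhds (⟨⟨c₀, hc₀⟩, y₀⟩ : ↑C × (ℕ → Bool))] (fun p => p.1.val (n₁ - 1)) := by
        filter_upwards [hnbhd] with p hp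
        rw [hkey p hp, if_pos hpar]
      exact (((continuous_apply (n₁-1)).comp hval).continuousAt).congr hev.symm
    · have hev : (fun p : ↑C × (ℕ → Bool) => en C p.1.val p.2 i)
          =ᶠ[nhds (⟨⟨c₀, hc₀⟩, y₀⟩ : ↑C × (ℕ → Bool))] (fun p => p.2 j) := by
        filter_upwards [hnbhd] with p hp
        rw [hkey p hp, if_neg hpar]
      exact (((continuous_apply j).comp continuous_snd).continuousAt).congr hev.symm
  · obtain ⟨n₀, hn₀cc, hnb⟩ := no_cbranch_after h
    set m := MJ C c₀ j with hm
    have hnbhd : {p : ↑C × (ℕ → Bool) | ∀ k < n₀, p.1.val k = c₀ k} ∈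
        nhds (⟨⟨c₀, hc₀⟩, y₀⟩ : ↑C × (ℕ → Bool)) :=
      hval.continuousAt (x := (⟨⟨c₀, hc₀⟩, y₀⟩ : ↑C × (ℕ → Bool))) (cyl_mem_nhds c₀ n₀)
    have hev : (fun p : ↑C × (ℕ → Bool) => en C p.1.val p.2 i)
        =ᶠ[nhds (⟨⟨c₀, hc₀⟩, y₀⟩ : ↑C × (ℕ → Bool))] (fun p => p.2 (i - m)) := by
      filter_upwards [hnbhd] with p hp
      have hceq : p.1.val = c₀ := forced_path hc₀ p.1.2 hnb hp
      show en C p.1.val p.2 i = p.2 (i - m)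
      rw [hceq, en, dif_neg h]
    exact (((continuous_apply (i - m)).comp continuous_snd).continuousAt).congr hev.symm

noncomputable def decHomeo (hC : IsClosed C) (hne : C.Nonempty) :
    (ℕ → Bool) ≃ₜ ↑C × (ℕ → Bool) where
  toFun := fun x => (⟨dc C x, dc_mem hC hne x⟩, dy C x)
  invFun := fun p => en C p.1.val p.2
  left_inv := fun x => en_dc_dy x
  right_inv := fun p => by
    have hT : ∀ n, Tn C (Pfx p.1.val n) := Tn_of_mem p.1.2
    refine Prod.ext ?_ ?_
    · exact Subtype.ext (dc_en hT)
    · exact dy_en hT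
  continuous_toFun := by
    exact (Continuous.subtype_mk cont_dc _).prodMk cont_dy
  continuous_invFun := cont_en

end CantorAux

open CantorAux

/-- A topological group `G` is extremely amenable if every continuous action of `G` on a
(nonempty) compact Hausdorff space has a fixed point. -/
def ExtremelyAmenable (G : Type) [Group G] [TopologicalSpace G] : Prop :=
  ∀ (X : Type) [TopologicalSpace X] [CompactSpace X] [T2Space X] [Nonempty X]
    [MulAction G X] [ContinuousSMul G X],
    ∃ x : X, ∀ g : G, g • x = x

/-- A non-archimedean Polish group `G` is extremely amenable if and only if every
continuous action of `G` on the Cantor space `{0,1}^ℕ` has a fixed point. -/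
theorem nonarchimedean_polish_extremely_amenable_iff_fixed_point_on_cantor
    (G : Type) [Group G] [TopologicalSpace G] [IsTopologicalGroup G] [PolishSpace G]
    [NonarchimedeanGroup G] :
    ExtremelyAmenable G ↔
      ∀ inst : MulAction G (ℕ → Bool),
        @ContinuousSMul G (ℕ → Bool) inst.toSMul _ _ →
        ∃ x : ℕ → Bool, ∀ g : G, @SMul.smul G (ℕ → Bool) inst.toSMul g x = x := by
  constructor
  · intro hEA inst hcont
    exact @hEA (ℕ → Bool) _ _ _ _ inst hcont
  · intro hyp
    intro X _ _ _ _ _ _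
    by_contra hfix
    push_neg at hfix
    -- Step 1: fixed-point-free open sets
    have sep : ∀ x : X, ∃ (g : G) (U : Set X), IsOpen U ∧ x ∈ U ∧ ∀ z ∈ U, g • z ∉ U := by
      intro x
      obtain ⟨g, hg⟩ := hfix x
      obtain ⟨A, B, hA, hB, hgA, hxB, hAB⟩ := t2_separation hg
      refine ⟨g, B ∩ (fun z => g • z) ⁻¹' A,
        hB.inter (hA.preimage (continuous_const_smul g)), ⟨hxB, hgA⟩, ?_⟩
      rintro z ⟨_, hzA⟩ ⟨hgzB, _⟩
      exact Set.disjoint_left.mp hAB hzA hgzB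
    choose gfun Ufun hUopen hUmem hUdisj using sep
    -- Step 2: finite subcover
    obtain ⟨t, ht⟩ := isCompact_univ.elim_finite_subcover Ufun hUopen
      (fun x _ => Set.mem_iUnion.mpr ⟨x, hUmem x⟩)
    have x₀ : X := Classical.arbitrary X
    have hcov : ∀ y : X, ∃ x ∈ t, y ∈ Ufun x := by
      intro y
      have := ht (Set.mem_univ y)
      simpa using this
    have htne : t.Nonempty := by
      obtain ⟨x, hx, -⟩ := hcov x₀
      exact ⟨x, hx⟩
    set N := t.card with hNdef
    have hN : 0 < N := Finset.card_pos.mpr htne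
    haveI : NeZero N := ⟨hN.ne'⟩
    haveI : Nonempty (Fin N) := ⟨⟨0, hN⟩⟩
    set idx : Fin N → X := fun i => ((t.equivFin.symm i) : X) with hidx
    set U : Fin N → Set X := fun i => Ufun (idx i) with hU
    set gg : Fin N → G := fun i => gfun (idx i) with hgg
    have hcov' : ∀ y : X, ∃ i : Fin N, y ∈ U i := by
      intro y
      obtain ⟨x, hx, hyx⟩ := hcov y
      refine ⟨t.equivFin ⟨x, hx⟩, ?_⟩
      show y ∈ Ufun ((t.equivFin.symm (t.equivFin ⟨x, hx⟩)) : X)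
      rw [Equiv.symm_apply_apply]
      exact hyx
    -- Step 3: Lebesgue-type lemma for open subgroups
    have leb : ∃ V : OpenSubgroup G, ∀ y : X, ∃ i : Fin N, ∀ v : G, v ∈ V → v • y ∈ U i := by
      have pointwise : ∀ y : X, ∃ (W : OpenSubgroup G) (O : Set X) (i : Fin N),
          IsOpen O ∧ y ∈ O ∧ ∀ v : G, v ∈ W → ∀ z ∈ O, v • z ∈ U i := by
        intro y
        obtain ⟨i, hyi⟩ := hcov' y
        have hopen : IsOpen ((fun p : G × X => p.1 • p.2) ⁻¹' U i) :=
          (hUopen (idx i)).preimage continuous_smul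
        have hmem : ((1 : G), y) ∈ (fun p : G × X => p.1 • p.2) ⁻¹' U i := by
          show (1 : G) • y ∈ U i
          rw [one_smul]; exact hyi
        obtain ⟨u, o, hu, ho, h1u, hyo, huo⟩ := isOpen_prod_iff.mp hopen 1 y hmem
        obtain ⟨W, hW⟩ := NonarchimedeanGroup.is_nonarchimedean u (hu.mem_nhds h1u)
        exact ⟨W, o, i, ho, hyo, fun v hv z hz => huo (Set.mk_mem_prod (hW hv) hz)⟩
      choose W O iof hOopen hOmem hprop using pointwise
      obtain ⟨s, hs⟩ := isCompact_univ.elim_finite_subcover O hOopen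
        (fun y _ => Set.mem_iUnion.mpr ⟨y, hOmem y⟩)
      refine ⟨s.inf W, fun y => ?_⟩
      have : ∃ y' ∈ s, y ∈ O y' := by simpa using hs (Set.mem_univ y)
      obtain ⟨y', hy's, hyO⟩ := this
      refine ⟨iof y', fun v hv => ?_⟩
      exact hprop y' v (SetLike.le_def.mp (Finset.inf_le hy's) hv) y hyO
    obtain ⟨V, hV⟩ := leb
    -- Step 4: the coloring
    have hSinv : ∀ (w g : G), w ∈ V →
        {z : X | ∃ v, v ∈ V ∧ z = (v * (w * g)) • x₀} = {z : X | ∃ v, v ∈ V ∧ z = (v * g) • x₀} := by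
      intro w g hw
      ext z
      constructor
      · rintro ⟨v, hv, rfl⟩
        exact ⟨v * w, V.mul_mem hv hw, by rw [mul_assoc]⟩
      · rintro ⟨v, hv, rfl⟩
        refine ⟨v * w⁻¹, V.mul_mem hv (V.inv_mem hw), ?_⟩
        have hgrp : (v * w⁻¹) * (w * g) = v * g := by group
        rw [hgrp]
    set F : Set X → Fin N := fun S => if h : ∃ i, S ⊆ U i then h.choose else Classical.arbitrary (Fin N) with hF
    set τ : G → Fin N := fun g => F {z : X | ∃ v, v ∈ V ∧ z = (v * g) • x₀} with hτdef
    have hτex : ∀ g : G, ∃ i, {z : X | ∃ v, v ∈ V ∧ z = (v * g) • x₀} ⊆ U i := by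
      intro g
      obtain ⟨i, hi⟩ := hV (g • x₀)
      refine ⟨i, ?_⟩
      rintro z ⟨v, hv, rfl⟩
      rw [mul_smul]
      exact hi v hv
    have hτ : ∀ (g v : G), v ∈ V → (v * g) • x₀ ∈ U (τ g) := by
      intro g v hv
      have hex := hτex g
      have : τ g = hex.choose := by
        show F _ = _
        rw [hF]
        simp only [dif_pos hex]
      rw [this]
      exact hex.choose_spec ⟨v, hv, rfl⟩
    have hτinv : ∀ (w g : G), w ∈ V → τ (w * g) = τ g := by
      intro w g hw
      show F _ = F _
      rw [hSinv w g hw]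
    -- Step 5: the flow on colorings
    haveI : CompactSpace (G → Fin N) := by infer_instance
    set SV : Set (G → Fin N) := {σ | ∀ w : G, w ∈ V → ∀ g : G, σ (w * g) = σ g} with hSVdef
    set orb : Set (G → Fin N) := {σ | ∃ h : G, σ = fun g => τ (g * h)} with horbdef
    set Z : Set (G → Fin N) := closure orb with hZdef
    have hτorb : (τ : G → Fin N) ∈ orb := ⟨1, by funext g; rw [mul_one]⟩
    have hτZ : (τ : G → Fin N) ∈ Z := subset_closure hτorb
    have hSVclosed : IsClosed SV := by
      rw [hSVdef]
      have : {σ : G → Fin N | ∀ w : G, w ∈ V → ∀ g : G, σ (w * g) = σ g}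
          = ⋂ (w : G) (_ : w ∈ V) (g : G), {σ : G → Fin N | σ (w * g) = σ g} := by
        ext σ; simp
      rw [this]
      exact isClosed_iInter fun w => isClosed_iInter fun _ => isClosed_iInter fun g =>
        isClosed_eq (continuous_apply _) (continuous_apply _)
    have horbSV : orb ⊆ SV := by
      rintro σ ⟨h, rfl⟩ w hw g
      show τ ((w * g) * h) = τ (g * h)
      rw [mul_assoc]
      exact hτinv w (g * h) hw
    have hZSV : Z ⊆ SV := by
      rw [hZdef, ← hSVclosed.closure_eq]
      exact closure_mono horbSV
    have hZinv : ∀ (h : G) (σ : G → Fin N), σ ∈ Z → (fun g => σ (g * h)) ∈ Z := by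
      intro h σ hσ
      have hcont : Continuous (fun σ' : G → Fin N => (fun g => σ' (g * h))) :=
        continuous_pi fun g => continuous_apply (g * h)
      have himg : (fun σ' : G → Fin N => (fun g => σ' (g * h))) '' orb ⊆ orb := by
        rintro ρ ⟨σ', ⟨h', rfl⟩, rfl⟩
        exact ⟨h * h', by funext g; show τ ((g * h) * h') = τ (g * (h * h')); rw [mul_assoc]⟩
      have := image_closure_subset_closure_image (s := orb) hcont
      have hmem : (fun g => σ (g * h)) ∈ (fun σ' : G → Fin N => (fun g => σ' (g * h))) '' closure orb :=
        Set.mem_image_of_mem _ hσ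
      exact closure_mono himg (this hmem)
    set actZ : G → ↥Z → ↥Z := fun h σ => ⟨fun g => σ.val (g * h), hZinv h σ.val σ.2⟩ with hactZ
    have actZ_one : ∀ σ : ↥Z, actZ 1 σ = σ := by
      intro σ
      apply Subtype.ext
      funext g
      show σ.val (g * 1) = σ.val g
      rw [mul_one]
    have actZ_mul : ∀ (a b : G) (σ : ↥Z), actZ (a * b) σ = actZ a (actZ b σ) := by
      intro a b σ
      apply Subtype.ext
      funext g
      show σ.val (g * (a * b)) = σ.val ((g * a) * b)
      rw [mul_assoc]
    have actCont : Continuous (fun q : G × ↥Z => actZ q.1 q.2) := by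
      apply Continuous.subtype_mk
      apply continuous_pi
      intro a
      rw [continuous_iff_continuousAt]
      rintro ⟨h₀, σ₀⟩
      have hNh : IsOpen {h : G | (a * h) * (a * h₀)⁻¹ ∈ V} := by
        have hcm : Continuous fun h : G => (a * h) * (a * h₀)⁻¹ :=
          (continuous_const.mul continuous_id).mul continuous_const
        exact V.isOpen.preimage hcm
      have hmem : h₀ ∈ {h : G | (a * h) * (a * h₀)⁻¹ ∈ V} := by
        show (a * h₀) * (a * h₀)⁻¹ ∈ V
        rw [mul_inv_cancel]
        exact V.one_mem
      have hev : (fun q : G × ↥Z => q.2.val (a * q.1))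
          =ᶠ[nhds (h₀, σ₀)] (fun q => q.2.val (a * h₀)) := by
        filter_upwards [prod_mem_nhds (hNh.mem_nhds hmem) Filter.univ_mem] with q hq
        have hq1 : (a * q.1) * (a * h₀)⁻¹ ∈ V := hq.1
        have hw : ((a * q.1) * (a * h₀)⁻¹) * (a * h₀) = a * q.1 := inv_mul_cancel_right _ _
        have hSV : q.2.val ∈ SV := hZSV q.2.2
        calc q.2.val (a * q.1) = q.2.val (((a * q.1) * (a * h₀)⁻¹) * (a * h₀)) := by rw [hw]
        _ = q.2.val (a * h₀) := hSV _ hq1 _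
      exact (((continuous_apply (a * h₀)).comp
        (continuous_subtype_val.comp continuous_snd)).continuousAt).congr hev.symm
    -- fixed-point freeness of the flow on Z
    have hfp : ∀ σ : ↥Z, ∃ h : G, actZ h σ ≠ σ := by
      intro σ
      by_contra hcon
      push_neg at hcon
      have hconst : ∀ h : G, σ.val h = σ.val 1 := by
        intro h
        have := congrArg Subtype.val (hcon h)
        have h2 : σ.val (1 * h) = σ.val 1 := congrFun this 1
        rwa [one_mul] at h2
      set j : Fin N := σ.val 1 with hj
      have hopen1 : ∀ g₀ : G, IsOpen {ρ : G → Fin N | ρ g₀ = j} := by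
        intro g₀
        have heq' : {ρ : G → Fin N | ρ g₀ = j} = (fun ρ : G → Fin N => ρ g₀) ⁻¹' {j} := by
          ext ρ; simp
        rw [heq']
        exact (continuous_apply g₀).isOpen_preimage _ (isOpen_discrete _)
      have hopen : IsOpen {ρ : G → Fin N | ρ 1 = j ∧ ρ (gg j) = j} := by
        have hsplit : {ρ : G → Fin N | ρ 1 = j ∧ ρ (gg j) = j}
            = {ρ : G → Fin N | ρ 1 = j} ∩ {ρ : G → Fin N | ρ (gg j) = j} := rfl
        rw [hsplit]
        exact (hopen1 1).inter (hopen1 (gg j))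
      have hmemo : σ.val ∈ {ρ : G → Fin N | ρ 1 = j ∧ ρ (gg j) = j} :=
        ⟨rfl, hconst (gg j)⟩
      obtain ⟨ρ, hρo, hρorb⟩ := mem_closure_iff.mp σ.2 _ hopen hmemo
      obtain ⟨h, rfl⟩ := hρorb
      have hτh : τ (1 * h) = j := hρo.1
      have hτgh : τ (gg j * h) = j := hρo.2
      rw [one_mul] at hτh
      have hx1 : h • x₀ ∈ U j := by
        have := hτ h 1 V.one_mem
        rwa [one_mul, hτh] at this
      have hx2 : (gg j * h) • x₀ ∈ U j := by
        have := hτ (gg j * h) 1 V.one_mem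
        rwa [one_mul, hτgh] at this
      rw [mul_smul] at hx2
      exact hUdisj (idx j) (h • x₀) hx1 hx2
    -- Step 6: embedding Z into Cantor space
    set e : ℕ → G := TopologicalSpace.denseSeq G with he
    have hdense : DenseRange e := TopologicalSpace.denseRange_denseSeq G
    set q : ℕ ≃ ℕ × Fin N := Nat.divModEquiv N with hq
    set Θ : (G → Fin N) → (ℕ → Bool) := fun σ m => decide (σ (e (q m).1) = (q m).2) with hΘ
    have hΘcont : Continuous Θ := by
      apply continuous_pi
      intro m
      exact (continuous_of_discreteTopology (α := Fin N)
        (f := fun v => decide (v = (q m).2))).comp (continuous_apply (e (q m).1))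
    have hΘinj : Set.InjOn Θ SV := by
      intro σ hσ σ' hσ' heq
      funext g
      have hcoset : IsOpen ((fun w => w * g) '' (V : Set G)) := by
        have := (Homeomorph.mulRight g).isOpenMap (V : Set G) V.isOpen
        simpa using this
      have hcne : ((fun w => w * g) '' (V : Set G)).Nonempty :=
        ⟨1 * g, 1, V.one_mem, rfl⟩
      obtain ⟨n, hn⟩ := hdense.exists_mem_open hcoset hcne
      obtain ⟨w, hw, hwg⟩ := hn
      have h1 : σ g = σ (e n) := by rw [← hwg]; exact (hσ w hw g).symm
      have h2 : σ' g = σ' (e n) := by rw [← hwg]; exact (hσ' w hw g).symm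
      have h3 : σ (e n) = σ' (e n) := by
        have hthis := congrFun heq (q.symm (n, σ (e n)))
        simp only [hΘ, Equiv.apply_symm_apply, decide_eq_decide] at hthis
        exact (hthis.mp trivial).symm
      rw [h1, h3, ← h2]
    set C : Set (ℕ → Bool) := Θ '' Z with hCdef
    have hZcompact : IsCompact Z := isClosed_closure.isCompact
    have hCcompact : IsCompact C := hZcompact.image hΘcont
    have hCclosed : IsClosed C := hCcompact.isClosed
    have hCne : C.Nonempty := ⟨Θ τ, Set.mem_image_of_mem Θ hτZ⟩
    haveI : CompactSpace ↥Z := isCompact_iff_compactSpace.mp hZcompact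
    set eqC : ↥Z ≃ ↑C := Equiv.Set.imageOfInjOn Θ Z (hΘinj.mono hZSV) with heqC
    have heqCcont : Continuous (eqC : ↥Z → ↑C) :=
      Continuous.subtype_mk (hΘcont.comp continuous_subtype_val) _
    set Zhom : ↥Z ≃ₜ ↑C := heqCcont.homeoOfEquivCompactToT2 with hZhom
    -- Step 7: the action on Cantor space and the contradiction
    set Hfin : (ℕ → Bool) ≃ₜ ↑C × (ℕ → Bool) := CantorAux.decHomeo hCclosed hCne with hHfin
    set A : G → (ℕ → Bool) → (ℕ → Bool) :=
      fun h x => Hfin.symm (Zhom (actZ h (Zhom.symm (Hfin x).1)), (Hfin x).2) with hA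
    have hA_one : ∀ x, A 1 x = x := by
      intro x
      rw [hA]
      simp only [actZ_one, Homeomorph.apply_symm_apply]
      rw [show ((Hfin x).1, (Hfin x).2) = Hfin x from rfl]
      exact Hfin.symm_apply_apply x
    have hA_mul : ∀ (a b : G) (x), A (a * b) x = A a (A b x) := by
      intro a b x
      rw [hA]
      simp only []
      have h1 : Hfin (Hfin.symm (Zhom (actZ b (Zhom.symm (Hfin x).1)), (Hfin x).2))
          = (Zhom (actZ b (Zhom.symm (Hfin x).1)), (Hfin x).2) := Hfin.apply_symm_apply _
      rw [h1]
      simp only [Homeomorph.symm_apply_apply]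
      rw [actZ_mul]
    let M : MulAction G (ℕ → Bool) :=
      { smul := A
        one_smul := hA_one
        mul_smul := hA_mul }
    have hMc : Continuous fun p : G × (ℕ → Bool) => A p.1 p.2 := by
      have hc1 : Continuous fun p : G × (ℕ → Bool) => (Hfin p.2) :=
        Hfin.continuous.comp continuous_snd
      have hc2 : Continuous fun p : G × (ℕ → Bool) => Zhom.symm (Hfin p.2).1 :=
        Zhom.symm.continuous.comp (continuous_fst.comp hc1)
      have hc3 : Continuous fun p : G × (ℕ → Bool) => actZ p.1 (Zhom.symm (Hfin p.2).1) :=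
        actCont.comp (continuous_fst.prodMk hc2)
      exact Hfin.symm.continuous.comp
        ((Zhom.continuous.comp hc3).prodMk (continuous_snd.comp hc1))
    have hMcont : @ContinuousSMul G (ℕ → Bool) M.toSMul _ _ :=
      @ContinuousSMul.mk G (ℕ → Bool) M.toSMul _ _ hMc
    obtain ⟨x, hx⟩ := hyp M hMcont
    have hxA : ∀ g : G, A g x = x := hx
    set z : ↥Z := Zhom.symm (Hfin x).1 with hz
    have hzfix : ∀ g : G, actZ g z = z := by
      intro g
      have h1 : Hfin (A g x) = Hfin x := congrArg Hfin (hxA g)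
      rw [hA] at h1
      rw [Homeomorph.apply_symm_apply] at h1
      have h2 : Zhom (actZ g z) = (Hfin x).1 := congrArg Prod.fst h1
      have h3 : Zhom z = (Hfin x).1 := Zhom.apply_symm_apply _
      have h4 : Zhom (actZ g z) = Zhom z := by rw [h2, h3]
      exact Zhom.injective h4
    obtain ⟨h, hh⟩ := hfp z
    exact hh (hzfix h)
end

section
/- Let G be a topological group and let (X_α, π_{αβ}, I) be an inverse (projective) system of compact Hausdorff G-spaces with continuous G-equivariant bonding maps, indexed by a directed set I. If each X_α admits a G-invariant regular Borel probability measure, then the inverse limit lim← X_α admits a G-invariant regular Borel probability measure. -/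
open MeasureTheory Set TopologicalSpace Filter Topology BoundedContinuousFunction
open scoped NNReal ENNReal

/-- Riesz content on bounded continuous functions (the former Mathlib version). -/
noncomputable def rieszContentAuxB {X : Type*} [TopologicalSpace X] (Λ : (X →ᵇ ℝ≥0) →ₗ[ℝ≥0] ℝ≥0) :
    Compacts X → ℝ≥0 := fun K =>
  sInf (Λ '' { f : X →ᵇ ℝ≥0 | ∀ x ∈ K, (1 : ℝ≥0) ≤ f x })

theorem rieszContentAuxB_image_nonempty {X : Type*} [TopologicalSpace X]
    (Λ : (X →ᵇ ℝ≥0) →ₗ[ℝ≥0] ℝ≥0) (K : Compacts X) :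
    (Λ '' { f : X →ᵇ ℝ≥0 | ∀ x ∈ K, (1 : ℝ≥0) ≤ f x }).Nonempty :=
  ⟨Λ 1, 1, fun _ _ => le_rfl, rfl⟩

theorem rieszContentAuxB_mono {X : Type*} [TopologicalSpace X]
    (Λ : (X →ᵇ ℝ≥0) →ₗ[ℝ≥0] ℝ≥0) {K₁ K₂ : Compacts X} (h : K₁ ≤ K₂) :
    rieszContentAuxB Λ K₁ ≤ rieszContentAuxB Λ K₂ :=
  csInf_le_csInf (OrderBot.bddBelow _) (rieszContentAuxB_image_nonempty Λ K₂)
    (Set.image_mono fun f hf x hx => hf x (h hx))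

theorem rieszContentAuxB_le {X : Type*} [TopologicalSpace X]
    (Λ : (X →ᵇ ℝ≥0) →ₗ[ℝ≥0] ℝ≥0) {K : Compacts X} {f : X →ᵇ ℝ≥0}
    (h : ∀ x ∈ K, (1 : ℝ≥0) ≤ f x) : rieszContentAuxB Λ K ≤ Λ f :=
  csInf_le (OrderBot.bddBelow _) ⟨f, ⟨h, rfl⟩⟩

theorem exists_lt_rieszContentAuxB_add_pos {X : Type*} [TopologicalSpace X]
    (Λ : (X →ᵇ ℝ≥0) →ₗ[ℝ≥0] ℝ≥0) (K : Compacts X) {ε : ℝ≥0} (εpos : 0 < ε) :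
    ∃ f : X →ᵇ ℝ≥0, (∀ x ∈ K, (1 : ℝ≥0) ≤ f x) ∧ Λ f < rieszContentAuxB Λ K + ε := by
  obtain ⟨α, ⟨⟨f, f_hyp⟩, α_hyp⟩⟩ :=
    exists_lt_of_csInf_lt (rieszContentAuxB_image_nonempty Λ K)
      (lt_add_of_pos_right (rieszContentAuxB Λ K) εpos)
  refine ⟨f, f_hyp.left, ?_⟩
  rw [f_hyp.right]
  exact α_hyp

theorem rieszContentAuxB_sup_le {X : Type*} [TopologicalSpace X]
    (Λ : (X →ᵇ ℝ≥0) →ₗ[ℝ≥0] ℝ≥0) (K1 K2 : Compacts X) :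
    rieszContentAuxB Λ (K1 ⊔ K2) ≤ rieszContentAuxB Λ K1 + rieszContentAuxB Λ K2 := by
  apply _root_.le_of_forall_pos_le_add
  intro ε εpos
  obtain ⟨f1, f_test_function_K1⟩ := exists_lt_rieszContentAuxB_add_pos Λ K1 (half_pos εpos)
  obtain ⟨f2, f_test_function_K2⟩ := exists_lt_rieszContentAuxB_add_pos Λ K2 (half_pos εpos)
  have f_test_function_union : ∀ x ∈ K1 ⊔ K2, (1 : ℝ≥0) ≤ (f1 + f2) x := by
    rintro x (x_in_K1 | x_in_K2)
    · exact le_add_right (f_test_function_K1.left x x_in_K1)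
    · exact le_add_left (f_test_function_K2.left x x_in_K2)
  apply (rieszContentAuxB_le Λ f_test_function_union).trans (le_of_lt _)
  rw [map_add]
  apply lt_of_lt_of_le (_root_.add_lt_add f_test_function_K1.right f_test_function_K2.right)
    (le_of_eq _)
  rw [add_assoc, add_comm (ε / 2), add_assoc, add_halves ε, add_assoc]

/-- If every space in an inverse system of compact Hausdorff `G`-spaces (over a directed
index set, with continuous equivariant bonding maps) carries a `G`-invariant regular Borel
probability measure, then so does the inverse limit (the space of threads, with the
coordinatewise `G`-action and its Borel σ-algebra). -/
theorem inverse_limit_has_invariant_measure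
    (G : Type) [Group G] [TopologicalSpace G] [IsTopologicalGroup G]
    (I : Type) [Preorder I] [IsDirected I (· ≤ ·)]
    (X : I → Type) [∀ i, TopologicalSpace (X i)] [∀ i, CompactSpace (X i)]
    [∀ i, T2Space (X i)] [∀ i, MeasurableSpace (X i)] [∀ i, BorelSpace (X i)]
    [∀ i, MulAction G (X i)] [∀ i, ContinuousSMul G (X i)]
    (π : ∀ ⦃i j : I⦄, i ≤ j → X j → X i)
    (hπcont : ∀ ⦃i j : I⦄ (h : i ≤ j), Continuous (π h))
    (hπequiv : ∀ (g : G) ⦃i j : I⦄ (h : i ≤ j) (x : X j), π h (g • x) = g • π h x)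
    (hπid : ∀ (i : I) (x : X i), π (le_refl i) x = x)
    (hπcomp : ∀ ⦃i j k : I⦄ (hij : i ≤ j) (hjk : j ≤ k) (x : X k),
      π hij (π hjk x) = π (hij.trans hjk) x)
    (hinv : ∀ i : I, ∃ μ : Measure (X i), IsProbabilityMeasure μ ∧ μ.Regular ∧
      ∀ g : G, Measure.map (fun x : X i => g • x) μ = μ)
    [mL : MeasurableSpace {x : ∀ i, X i // ∀ ⦃i j : I⦄ (h : i ≤ j), π h (x j) = x i}]
    (hmL : @BorelSpace {x : ∀ i, X i // ∀ ⦃i j : I⦄ (h : i ≤ j), π h (x j) = x i} _ mL) :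
    ∃ μ : Measure {x : ∀ i, X i // ∀ ⦃i j : I⦄ (h : i ≤ j), π h (x j) = x i},
      IsProbabilityMeasure μ ∧ μ.Regular ∧
      ∀ g : G,
        Measure.map
          (fun x : {x : ∀ i, X i // ∀ ⦃i j : I⦄ (h : i ≤ j), π h (x j) = x i} =>
            (⟨fun i => g • x.1 i,
              fun i j h => (hπequiv g h (x.1 j)).trans (congrArg (fun y => g • y) (x.2 h))⟩ :
              {x : ∀ i, X i // ∀ ⦃i j : I⦄ (h : i ≤ j), π h (x j) = x i}))
          μ = μ := by
  classical
  by_cases hIe : IsEmpty I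
  · -- trivial case: the limit is a one-point space
    haveI : IsEmpty I := hIe
    haveI hsub : Subsingleton (∀ i, X i) := ⟨fun a b => funext fun i => isEmptyElim i⟩
    haveI : Subsingleton {x : ∀ i, X i // ∀ ⦃i j : I⦄ (h : i ≤ j), π h (x j) = x i} :=
      ⟨fun a b => Subtype.ext (Subsingleton.elim _ _)⟩
    haveI : Finite {x : ∀ i, X i // ∀ ⦃i j : I⦄ (h : i ≤ j), π h (x j) = x i} :=
      Finite.of_subsingleton
    haveI : CompactSpace {x : ∀ i, X i // ∀ ⦃i j : I⦄ (h : i ≤ j), π h (x j) = x i} :=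
      Finite.compactSpace
    let x₀ : {x : ∀ i, X i // ∀ ⦃i j : I⦄ (h : i ≤ j), π h (x j) = x i} :=
      ⟨fun i => isEmptyElim i, fun i _ _ => (IsEmpty.false i).elim⟩
    have hsets : ∀ A : Set {x : ∀ i, X i // ∀ ⦃i j : I⦄ (h : i ≤ j), π h (x j) = x i},
        A = ∅ ∨ A = Set.univ := by
      intro A
      rcases Set.eq_empty_or_nonempty A with h | h
      · exact Or.inl h
      · refine Or.inr ?_
        obtain ⟨a, ha⟩ := h
        apply Set.eq_univ_of_forall
        intro x
        rwa [Subsingleton.elim x a]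
    refine ⟨Measure.dirac x₀, inferInstance, ?_, ?_⟩
    · haveI h1 : IsFiniteMeasureOnCompacts (Measure.dirac x₀) :=
        ⟨fun _K _ => measure_lt_top _ _⟩
      haveI h2 : (Measure.dirac x₀).OuterRegular := by
        refine ⟨fun A _ r hr => ⟨A, subset_rfl, ?_, hr⟩⟩
        rcases hsets A with rfl | rfl
        exacts [isOpen_empty, isOpen_univ]
      refine ⟨fun V _ r hr => ⟨V, subset_rfl, ?_, hr⟩⟩
      rcases hsets V with rfl | rfl
      exacts [isCompact_empty, isCompact_univ]
    · intro g
      have hm : Measurable fun x : {x : ∀ i, X i // ∀ ⦃i j : I⦄ (h : i ≤ j), π h (x j) = x i} =>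
          (⟨fun i => g • x.1 i,
            fun i j h => (hπequiv g h (x.1 j)).trans (congrArg (fun y => g • y) (x.2 h))⟩ :
            {x : ∀ i, X i // ∀ ⦃i j : I⦄ (h : i ≤ j), π h (x j) = x i}) :=
        Subsingleton.measurable
      rw [Measure.map_dirac' hm]
      congr 1
      exact Subsingleton.elim _ _
  -- main case
  haveI hne : Nonempty I := not_isEmpty_iff.mp hIe
  -- choose the invariant measures
  choose μ hμprob hμreg hμinv using hinv
  haveI : ∀ i, IsProbabilityMeasure (μ i) := hμprob
  have hXne : ∀ j, Nonempty (X j) := by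
    intro j
    by_contra h
    rw [not_nonempty_iff] at h
    have h1 := (hμprob j).measure_univ
    rw [Set.univ_eq_empty_iff.mpr h] at h1
    simp at h1
  let b : ∀ j, X j := fun j => Classical.arbitrary _
  -- the approximations X i → ∀ j, X j
  let F : ∀ i : I, X i → ∀ j, X j := fun i x j => if h : j ≤ i then π h x else b j
  have hFcont : ∀ i, Continuous (F i) := by
    intro i
    refine continuous_pi fun j => ?_
    by_cases h : j ≤ i
    · simpa [F, h] using (hπcont h)
    · simpa [F, h] using continuous_const
  have hFmem : ∀ ⦃a c : I⦄ (hac : a ≤ c) ⦃i : I⦄ (hci : c ≤ i) (x : X i),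
      π hac (F i x c) = F i x a := by
    intro a c hac i hci x
    simp only [F, dif_pos hci, dif_pos (hac.trans hci)]
    exact hπcomp hac hci x
  -- Borel structure on the product
  letI mZ : MeasurableSpace (∀ j, X j) := borel _
  haveI hbZ : BorelSpace (∀ j, X j) := ⟨rfl⟩
  -- the ultrafilter
  haveI : (atTop : Filter I).NeBot := atTop_neBot_iff.mpr ⟨hne, ‹_›⟩
  let U : Ultrafilter I := Ultrafilter.of atTop
  have hU : (U : Filter I) ≤ (atTop : Filter I) := Ultrafilter.of_le _
  -- the net of integrals
  let fn : ((∀ j, X j) →ᵇ ℝ≥0) → I → ℝ≥0∞ := fun f i => ∫⁻ x, (f (F i x) : ℝ≥0∞) ∂(μ i)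
  have hmeas : ∀ (f : (∀ j, X j) →ᵇ ℝ≥0) (i : I),
      Measurable fun x : X i => (f (F i x) : ℝ≥0∞) :=
    fun f i => (ENNReal.continuous_coe.comp (f.continuous.comp (hFcont i))).measurable
  have hex : ∀ f : (∀ j, X j) →ᵇ ℝ≥0, ∃ a, Tendsto (fn f) (U : Filter I) (𝓝 a) := by
    intro f
    rcases isCompact_univ.ultrafilter_le_nhds (U.map (fn f)) (by simp) with ⟨a, -, ha⟩
    exact ⟨a, ha⟩
  choose lam hlam using hex
  have hbdd : ∀ f : (∀ j, X j) →ᵇ ℝ≥0, ∃ C : ℝ≥0, ∀ z, f z ≤ C := by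
    intro f
    haveI : Nonempty (∀ j, X j) := ⟨b⟩
    obtain ⟨z₀, -, hz₀⟩ := isCompact_univ.exists_isMaxOn Set.univ_nonempty
      f.continuous.continuousOn
    exact ⟨f z₀, fun z => hz₀ (Set.mem_univ z)⟩
  have hfn_le : ∀ (f : (∀ j, X j) →ᵇ ℝ≥0) (C : ℝ≥0), (∀ z, f z ≤ C) →
      ∀ i : I, fn f i ≤ (C : ℝ≥0∞) := by
    intro f C hC i
    calc fn f i ≤ ∫⁻ _, (C : ℝ≥0∞) ∂(μ i) :=
          lintegral_mono fun x => ENNReal.coe_le_coe.mpr (hC _)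
      _ = C := by simp
  have hlam_ne_top : ∀ f, lam f ≠ ⊤ := by
    intro f
    obtain ⟨C, hC⟩ := hbdd f
    exact ne_top_of_le_ne_top ENNReal.coe_ne_top
      (le_of_tendsto (hlam f) (Eventually.of_forall (hfn_le f C hC)))
  have hlam_add : ∀ f g : (∀ j, X j) →ᵇ ℝ≥0, lam (f + g) = lam f + lam g := by
    intro f g
    have h1 : fn (f + g) = fun i => fn f i + fn g i := by
      funext i
      have : ∀ x : X i, (((f + g) (F i x) : ℝ≥0) : ℝ≥0∞)
          = (f (F i x) : ℝ≥0∞) + (g (F i x) : ℝ≥0∞) := by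
        intro x
        simp [BoundedContinuousFunction.add_apply]
      simp only [fn, this]
      exact lintegral_add_left (hmeas f i) _
    refine tendsto_nhds_unique (hlam (f + g)) ?_
    rw [h1]
    exact (hlam f).add (hlam g)
  have hlam_smul : ∀ (c : ℝ≥0) (f : (∀ j, X j) →ᵇ ℝ≥0), lam (c • f) = (c : ℝ≥0∞) * lam f := by
    intro c f
    have h1 : fn (c • f) = fun i => (c : ℝ≥0∞) * fn f i := by
      funext i
      have : ∀ x : X i, (((c • f) (F i x) : ℝ≥0) : ℝ≥0∞)
          = (c : ℝ≥0∞) * (f (F i x) : ℝ≥0∞) := by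
        intro x
        simp [BoundedContinuousFunction.smul_apply, smul_eq_mul]
      simp only [fn, this]
      exact lintegral_const_mul _ (hmeas f i)
    refine tendsto_nhds_unique (hlam (c • f)) ?_
    rw [h1]
    exact ENNReal.Tendsto.const_mul (hlam f) (Or.inr ENNReal.coe_ne_top)
  have hlam_one : lam 1 = 1 := by
    have h1 : fn 1 = fun _ => (1 : ℝ≥0∞) := by
      funext i
      simp [fn]
    refine tendsto_nhds_unique (hlam 1) ?_
    rw [h1]
    exact tendsto_const_nhds
  have hlam_ge_one : ∀ f : (∀ j, X j) →ᵇ ℝ≥0, (∀ z, 1 ≤ f z) → 1 ≤ lam f := by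
    intro f hf
    refine ge_of_tendsto (hlam f) (Eventually.of_forall fun i => ?_)
    calc (1 : ℝ≥0∞) = ∫⁻ _, (1 : ℝ≥0∞) ∂(μ i) := by simp
      _ ≤ fn f i := lintegral_mono fun x => by
            simpa using ENNReal.coe_le_coe.mpr (hf (F i x))
  -- the positive linear functional
  let Lam : ((∀ j, X j) →ᵇ ℝ≥0) →ₗ[ℝ≥0] ℝ≥0 :=
    { toFun := fun f => (lam f).toNNReal
      map_add' := fun f g => by
        show (lam (f + g)).toNNReal = (lam f).toNNReal + (lam g).toNNReal
        rw [hlam_add]; exact ENNReal.toNNReal_add (hlam_ne_top f) (hlam_ne_top g)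
      map_smul' := fun c f => by
        show (lam (c • f)).toNNReal = c • (lam f).toNNReal
        rw [hlam_smul]
        simp [ENNReal.toNNReal_mul, smul_eq_mul] }
  -- key invariance of the functional
  have h150 : ∀ (g : G) (i : I), Measurable fun x : X i => g • x :=
    fun g i => (continuous_smul.comp (continuous_const.prodMk continuous_id)).measurable
  have hfn_shift : ∀ (g : G) (f : (∀ j, X j) →ᵇ ℝ≥0) (i : I),
      ∫⁻ x, (f (F i (g • x)) : ℝ≥0∞) ∂(μ i) = fn f i := by
    intro g f i
    conv_rhs => rw [show fn f i = ∫⁻ x, (f (F i x) : ℝ≥0∞) ∂(μ i) from rfl,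
      ← hμinv i g, lintegral_map (hmeas f i) (h150 g i)]
  have hkey : ∀ (g : G) (f : (∀ j, X j) →ᵇ ℝ≥0) (ε : ℝ≥0), 0 < ε →
      ∀ᶠ i in (atTop : Filter I), ∀ x : X i,
        f (g • F i x) < f (F i (g • x)) + ε ∧ f (F i (g • x)) < f (g • F i x) + ε := by
    intro g f ε hε
    set V : Set ((∀ j, X j) × (∀ j, X j)) :=
      {p | f p.1 < f p.2 + ε ∧ f p.2 < f p.1 + ε} with hV
    have hVopen : IsOpen V := by
      apply IsOpen.inter
      · exact isOpen_lt (by fun_prop) (by fun_prop)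
      · exact isOpen_lt (by fun_prop) (by fun_prop)
    set E : I → Set ((∀ j, X j) × (∀ j, X j)) := fun j => {p | p.1 j = p.2 j} with hE
    have hEclosed : ∀ j, IsClosed (E j) := fun j =>
      isClosed_eq ((continuous_apply j).comp continuous_fst)
        ((continuous_apply j).comp continuous_snd)
    have hVE : Vᶜ ∩ ⋂ j, E j = ∅ := by
      rw [Set.eq_empty_iff_forall_notMem]
      rintro p ⟨hp1, hp2⟩
      apply hp1
      have : p.1 = p.2 := funext fun j => (Set.mem_iInter.mp hp2 j)
      refine ⟨?_, ?_⟩ <;> rw [this] <;> exact lt_add_of_pos_right _ hε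
    obtain ⟨t, ht⟩ := (hVopen.isClosed_compl.isCompact).elim_finite_subfamily_closed
      E hEclosed hVE
    obtain ⟨M, hM⟩ := t.exists_le
    rw [eventually_atTop]
    refine ⟨M, fun i hMi x => ?_⟩
    have hmem : ((g • F i x, F i (g • x)) : (∀ j, X j) × (∀ j, X j)) ∈ ⋂ j ∈ t, E j := by
      refine Set.mem_iInter₂.mpr fun j hj => ?_
      have hji : j ≤ i := (hM j hj).trans hMi
      show (g • F i x) j = F i (g • x) j
      show g • (F i x j) = F i (g • x) j
      simp only [F, dif_pos hji]
      exact (hπequiv g hji x).symm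
    by_contra hcon
    have : ((g • F i x, F i (g • x)) : (∀ j, X j) × (∀ j, X j)) ∈ Vᶜ ∩ ⋂ j ∈ t, E j := by
      refine ⟨?_, hmem⟩
      intro hmemV
      apply hcon
      exact hmemV
    rw [ht] at this
    exact this
  have hlam_inv_le : ∀ (g : G) (f : (∀ j, X j) →ᵇ ℝ≥0),
      lam (f.compContinuous ⟨fun z => g • z, by fun_prop⟩) ≤ lam f := by
    intro g f
    refine ENNReal.le_of_forall_pos_le_add fun ε hε _ => ?_
    have h1 : ∀ᶠ i in (U : Filter I),
        fn (f.compContinuous ⟨fun z => g • z, by fun_prop⟩) i ≤ fn f i + ε := by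
      refine ((hkey g f ε hε).filter_mono hU).mono fun i hi => ?_
      have h2 : fn (f.compContinuous ⟨fun z => g • z, by fun_prop⟩) i
          ≤ ∫⁻ x, ((f (F i (g • x)) : ℝ≥0∞) + (ε : ℝ≥0∞)) ∂(μ i) := by
        refine lintegral_mono fun x => ?_
        have := (hi x).1
        calc ((f.compContinuous ⟨fun z => g • z, by fun_prop⟩) (F i x) : ℝ≥0∞)
            = (f (g • F i x) : ℝ≥0∞) := rfl
          _ ≤ ((f (F i (g • x)) + ε : ℝ≥0) : ℝ≥0∞) := ENNReal.coe_le_coe.mpr this.le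
          _ = (f (F i (g • x)) : ℝ≥0∞) + (ε : ℝ≥0∞) := by rw [ENNReal.coe_add]
      refine h2.trans ?_
      rw [lintegral_add_right _ measurable_const, lintegral_const, measure_univ, mul_one,
        hfn_shift g f i]
    have h3 : Tendsto (fun i => fn f i + (ε : ℝ≥0∞)) (U : Filter I) (𝓝 (lam f + ε)) :=
      (hlam f).add tendsto_const_nhds
    exact le_of_tendsto_of_tendsto (hlam _) h3 h1
  have hlam_inv : ∀ (g : G) (f : (∀ j, X j) →ᵇ ℝ≥0),
      lam (f.compContinuous ⟨fun z => g • z, by fun_prop⟩) = lam f := by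
    intro g f
    refine le_antisymm (hlam_inv_le g f) ?_
    refine ENNReal.le_of_forall_pos_le_add fun ε hε _ => ?_
    have h1 : ∀ᶠ i in (U : Filter I),
        fn f i ≤ fn (f.compContinuous ⟨fun z => g • z, by fun_prop⟩) i + ε := by
      refine ((hkey g f ε hε).filter_mono hU).mono fun i hi => ?_
      have h2 : (∫⁻ x, (f (F i (g • x)) : ℝ≥0∞) ∂(μ i))
          ≤ ∫⁻ x, ((f (g • F i x) : ℝ≥0∞) + (ε : ℝ≥0∞)) ∂(μ i) := by
        refine lintegral_mono fun x => ?_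
        have := (hi x).2
        calc (f (F i (g • x)) : ℝ≥0∞)
            ≤ ((f (g • F i x) + ε : ℝ≥0) : ℝ≥0∞) := ENNReal.coe_le_coe.mpr this.le
          _ = (f (g • F i x) : ℝ≥0∞) + (ε : ℝ≥0∞) := by rw [ENNReal.coe_add]
      rw [← hfn_shift g f i]
      refine h2.trans ?_
      rw [lintegral_add_right _ measurable_const, lintegral_const, measure_univ, mul_one]
      exact le_rfl
    have h3 : Tendsto (fun i => fn (f.compContinuous ⟨fun z => g • z, by fun_prop⟩) i + (ε : ℝ≥0∞))
        (U : Filter I) (𝓝 (lam (f.compContinuous ⟨fun z => g • z, by fun_prop⟩) + ε)) :=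
      (hlam _).add tendsto_const_nhds
    exact le_of_tendsto_of_tendsto (hlam _) h3 h1
  -- the content
  have hsup_disjoint : ∀ K₁ K₂ : Compacts (∀ j, X j), Disjoint (K₁ : Set (∀ j, X j)) K₂ →
      IsClosed (K₁ : Set (∀ j, X j)) → IsClosed (K₂ : Set (∀ j, X j)) →
      rieszContentAuxB Lam (K₁ ⊔ K₂) = rieszContentAuxB Lam K₁ + rieszContentAuxB Lam K₂ := by
    intro K₁ K₂ hdisj h1 h2
    refine le_antisymm (rieszContentAuxB_sup_le Lam K₁ K₂) ?_
    refine le_csInf (rieszContentAuxB_image_nonempty Lam (K₁ ⊔ K₂)) ?_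
    rintro a ⟨f, hf, rfl⟩
    obtain ⟨u, hu0, hu1, hu01⟩ := exists_continuous_zero_one_of_isClosed h2 h1 hdisj.symm
    have huc : Continuous fun z => Real.toNNReal (u z) :=
      continuous_real_toNNReal.comp u.continuous
    have hule : ∀ z, Real.toNNReal (u z) ≤ 1 := by
      intro z
      rw [show (1 : ℝ≥0) = Real.toNNReal 1 by simp]
      exact Real.toNNReal_mono (hu01 z).2
    let p : (∀ j, X j) →ᵇ ℝ≥0 :=
      mkOfCompact ⟨fun z => f z * Real.toNNReal (u z), f.continuous.mul huc⟩
    let q : (∀ j, X j) →ᵇ ℝ≥0 :=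
      mkOfCompact ⟨fun z => f z * (1 - Real.toNNReal (u z)), f.continuous.mul
        (continuous_const.sub huc)⟩
    have hpq : p + q = f := by
      refine BoundedContinuousFunction.ext fun z => ?_
      rw [BoundedContinuousFunction.add_apply]
      show f z * Real.toNNReal (u z) + f z * (1 - Real.toNNReal (u z)) = f z
      rw [← mul_add, add_tsub_cancel_of_le (hule z), mul_one]
    have hpK₁ : ∀ x ∈ K₁, (1 : ℝ≥0) ≤ p x := by
      intro x hx
      show (1 : ℝ≥0) ≤ f x * Real.toNNReal (u x)
      have h3 : Real.toNNReal (u x) = 1 := by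
        rw [hu1 hx]; simp
      rw [h3, mul_one]
      exact hf x (Set.mem_union_left _ hx)
    have hqK₂ : ∀ x ∈ K₂, (1 : ℝ≥0) ≤ q x := by
      intro x hx
      show (1 : ℝ≥0) ≤ f x * (1 - Real.toNNReal (u x))
      have h3 : Real.toNNReal (u x) = 0 := by
        rw [hu0 hx]; simp
      rw [h3, tsub_zero, mul_one]
      exact hf x (Set.mem_union_right _ hx)
    calc rieszContentAuxB Lam K₁ + rieszContentAuxB Lam K₂ ≤ Lam p + Lam q :=
          add_le_add (rieszContentAuxB_le Lam hpK₁) (rieszContentAuxB_le Lam hqK₂)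
      _ = Lam (p + q) := (map_add Lam p q).symm
      _ = Lam f := by rw [hpq]
  let κ : Content (∀ j, X j) :=
    { toFun := rieszContentAuxB Lam
      mono' := fun K₁ K₂ h => rieszContentAuxB_mono Lam h
      sup_disjoint' := hsup_disjoint
      sup_le' := rieszContentAuxB_sup_le Lam }
  let ν : Measure (∀ j, X j) := κ.measure
  have hνreg : ν.Regular := Content.regular κ
  haveI := hνreg
  -- total mass one
  have hν_univ : ν Set.univ = 1 := by
    have hcontent : rieszContentAuxB Lam ⟨Set.univ, isCompact_univ⟩ = 1 := by
      refine le_antisymm ?_ ?_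
      · have h1 : ∀ x ∈ (⟨Set.univ, isCompact_univ⟩ : Compacts (∀ j, X j)),
            (1 : ℝ≥0) ≤ (1 : (∀ j, X j) →ᵇ ℝ≥0) x := by
          intro x _
          simp
        refine (rieszContentAuxB_le Lam h1).trans ?_
        show (lam 1).toNNReal ≤ 1
        rw [hlam_one]
        simp
      · refine le_csInf (rieszContentAuxB_image_nonempty Lam _) ?_
        rintro a ⟨f, hf, rfl⟩
        show 1 ≤ (lam f).toNNReal
        have h2 : (1 : ℝ≥0∞) ≤ lam f := hlam_ge_one f fun z => hf z trivial
        have := ENNReal.toNNReal_mono (hlam_ne_top f) h2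
        simpa using this
    have h1 : ν Set.univ = κ.outerMeasure Set.univ := Content.measure_apply κ MeasurableSet.univ
    rw [h1, κ.outerMeasure_of_isOpen Set.univ isOpen_univ,
      κ.innerContent_of_isCompact isCompact_univ isOpen_univ]
    show ((rieszContentAuxB Lam ⟨Set.univ, isCompact_univ⟩ : ℝ≥0) : ℝ≥0∞) = 1
    rw [hcontent]
    simp
  haveI hνprob : IsProbabilityMeasure ν := ⟨hν_univ⟩
  -- the set of threads
  set LS : Set (∀ j, X j) := {x | ∀ ⦃i j : I⦄ (h : i ≤ j), π h (x j) = x i} with hLS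
  -- the closed constraint sets
  let C : {p : I × I // p.1 ≤ p.2} → Set (∀ j, X j) :=
    fun p => {x | π p.2 (x p.1.2) = x p.1.1}
  have hC_closed : ∀ p, IsClosed (C p) := fun p =>
    isClosed_eq ((hπcont p.2).comp (continuous_apply p.1.2)) (continuous_apply p.1.1)
  have hLS_eq : LS = ⋂ p, C p := by
    ext x
    simp only [hLS, Set.mem_setOf_eq, Set.mem_iInter, Subtype.forall, Prod.forall]
    constructor
    · intro hx a c h
      exact hx h
    · intro hx i j h
      exact hx i j h
  have hLSclosed : IsClosed LS := by
    rw [hLS_eq]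
    exact isClosed_iInter hC_closed
  have hνLc : ν LSᶜ = 0 := by
    have hcontent0 : ∀ K : Compacts (∀ j, X j), (K : Set (∀ j, X j)) ⊆ LSᶜ →
        rieszContentAuxB Lam K = 0 := by
      intro K hK
      have hinter : (K : Set (∀ j, X j)) ∩ ⋂ p, C p = ∅ := by
        rw [← hLS_eq, Set.eq_empty_iff_forall_notMem]
        rintro x ⟨hx1, hx2⟩
        exact hK hx1 hx2
      obtain ⟨t, ht⟩ := K.isCompact.elim_finite_subfamily_closed C hC_closed hinter
      obtain ⟨M, hM⟩ := (t.image fun p => p.1.2).exists_le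
      have hDclosed : IsClosed (⋂ p ∈ t, C p) := isClosed_biInter fun p _ => hC_closed p
      have hKD : Disjoint (⋂ p ∈ t, C p) (K : Set (∀ j, X j)) := by
        rw [Set.disjoint_iff_inter_eq_empty, Set.inter_comm]
        exact ht
      obtain ⟨u, hu0, hu1, hu01⟩ :=
        exists_continuous_zero_one_of_isClosed hDclosed K.isCompact.isClosed hKD
      let f₀ : (∀ j, X j) →ᵇ ℝ≥0 := mkOfCompact
        ⟨fun z => Real.toNNReal (u z), continuous_real_toNNReal.comp u.continuous⟩
      have hf₀K : ∀ x ∈ K, (1 : ℝ≥0) ≤ f₀ x := by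
        intro x hx
        show (1 : ℝ≥0) ≤ Real.toNNReal (u x)
        have h3 : Real.toNNReal (u x) = 1 := by rw [hu1 hx]; simp
        rw [h3]
      have hlam0 : lam f₀ = 0 := by
        refine tendsto_nhds_unique (hlam f₀) ?_
        have hev : ∀ᶠ i in (atTop : Filter I), fn f₀ i = 0 := by
          rw [eventually_atTop]
          refine ⟨M, fun i hMi => ?_⟩
          have hmem : ∀ x : X i, F i x ∈ ⋂ p ∈ t, C p := by
            intro x
            refine Set.mem_iInter₂.mpr fun p hp => ?_
            have hpi : p.1.2 ≤ i := (hM _ (Finset.mem_image_of_mem _ hp)).trans hMi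
            show π p.2 (F i x p.1.2) = F i x p.1.1
            exact hFmem p.2 hpi x
          have hzero : ∀ x : X i, (f₀ (F i x) : ℝ≥0∞) = 0 := by
            intro x
            have h4 : u (F i x) = 0 := by simpa using hu0 (hmem x)
            show ((Real.toNNReal (u (F i x)) : ℝ≥0) : ℝ≥0∞) = 0
            rw [h4]
            simp
          show (∫⁻ x, (f₀ (F i x) : ℝ≥0∞) ∂(μ i)) = 0
          simp only [hzero]
          simp
        exact (tendsto_congr' (hev.filter_mono hU)).mpr tendsto_const_nhds
      apply le_antisymm _ zero_le
      refine (rieszContentAuxB_le Lam hf₀K).trans ?_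
      show (lam f₀).toNNReal ≤ 0
      rw [hlam0]
      simp
    have h1 : ν LSᶜ = κ.outerMeasure LSᶜ :=
      Content.measure_apply κ hLSclosed.measurableSet.compl
    rw [h1, κ.outerMeasure_of_isOpen _ hLSclosed.isOpen_compl]
    refine le_antisymm ?_ zero_le
    show (⨆ (K : Compacts (∀ j, X j)) (_ : (K : Set (∀ j, X j)) ⊆
        ((⟨LSᶜ, hLSclosed.isOpen_compl⟩ : Opens (∀ j, X j)) : Set (∀ j, X j))), κ K) ≤ 0
    refine iSup₂_le fun K hK => ?_
    show ((rieszContentAuxB Lam K : ℝ≥0) : ℝ≥0∞) ≤ 0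
    rw [hcontent0 K hK]
    simp
  -- invariance of ν on measurable sets
  -- invariance of the content under the coordinatewise action
  have hmap_le : ∀ (g : G) (K : Compacts (∀ j, X j)),
      rieszContentAuxB Lam (K.map (fun z => g • z)
        (continuous_smul.comp (continuous_const.prodMk continuous_id)))
        ≤ rieszContentAuxB Lam K := by
    intro g K
    refine le_csInf (rieszContentAuxB_image_nonempty Lam K) ?_
    rintro a ⟨f, hf, rfl⟩
    have h1 : ∀ x ∈ (K.map (fun z => g • z)
        (continuous_smul.comp (continuous_const.prodMk continuous_id)) : Compacts (∀ j, X j)),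
        (1 : ℝ≥0) ≤ (f.compContinuous ⟨fun z => g⁻¹ • z, by fun_prop⟩) x := by
      rintro x ⟨y, hy, rfl⟩
      show (1 : ℝ≥0) ≤ f (g⁻¹ • g • y)
      rw [inv_smul_smul]
      exact hf y hy
    refine (rieszContentAuxB_le Lam h1).trans ?_
    show (lam _).toNNReal ≤ (lam f).toNNReal
    rw [hlam_inv g⁻¹ f]
  have hmap_eq : ∀ (g : G) (K : Compacts (∀ j, X j)),
      rieszContentAuxB Lam (K.map (fun z => g • z)
        (continuous_smul.comp (continuous_const.prodMk continuous_id)))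
        = rieszContentAuxB Lam K := by
    intro g K
    refine le_antisymm (hmap_le g K) ?_
    have h2 := hmap_le g⁻¹ (K.map (fun z => g • z)
      (continuous_smul.comp (continuous_const.prodMk continuous_id)))
    have h3 : (K.map (fun z => g • z)
        (continuous_smul.comp (continuous_const.prodMk continuous_id))).map (fun z => g⁻¹ • z)
        (continuous_smul.comp (continuous_const.prodMk continuous_id)) = K := by
      apply Compacts.ext
      simp only [Compacts.coe_map, Set.image_image, inv_smul_smul, Set.image_id']
    rwa [h3] at h2
  have hνinv : ∀ (g : G) (A : Set (∀ j, X j)), MeasurableSet A →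
      ν ((fun z => g • z) ⁻¹' A) = ν A := by
    intro g A hA
    let σ : (∀ j, X j) ≃ₜ (∀ j, X j) :=
      { toFun := fun z => g • z
        invFun := fun z => g⁻¹ • z
        left_inv := fun z => inv_smul_smul g z
        right_inv := fun z => smul_inv_smul g z
        continuous_toFun := continuous_smul.comp (continuous_const.prodMk continuous_id)
        continuous_invFun := continuous_smul.comp (continuous_const.prodMk continuous_id) }
    have hσ : ∀ ⦃K : Compacts (∀ j, X j)⦄, κ (K.map σ σ.continuous) = κ K := by
      intro K
      show ((rieszContentAuxB Lam (K.map σ σ.continuous) : ℝ≥0) : ℝ≥0∞)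
        = ((rieszContentAuxB Lam K : ℝ≥0) : ℝ≥0∞)
      exact_mod_cast hmap_eq g K
    have h1 := κ.outerMeasure_preimage σ hσ A
    have hpre : MeasurableSet ((fun z : ∀ j, X j => g • z) ⁻¹' A) :=
      hA.preimage (continuous_smul.comp
        (continuous_const.prodMk continuous_id)).measurable
    rw [show ν ((fun z => g • z) ⁻¹' A) = κ.outerMeasure ((fun z => g • z) ⁻¹' A) from
        Content.measure_apply κ hpre,
      show ν A = κ.outerMeasure A from Content.measure_apply κ hA]
    exact h1
  -- transfer to the subtype
  have hemb : MeasurableEmbedding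
      (Subtype.val : {x : ∀ i, X i // ∀ ⦃i j : I⦄ (h : i ≤ j), π h (x j) = x i} → ∀ j, X j) := by
    have := hmL
    exact (IsClosedEmbedding.subtypeVal hLSclosed).measurableEmbedding
  have hrange : Set.range
      (Subtype.val : {x : ∀ i, X i // ∀ ⦃i j : I⦄ (h : i ≤ j), π h (x j) = x i} → ∀ j, X j) = LS :=
    Subtype.range_coe_subtype
  haveI : CompactSpace {x : ∀ i, X i // ∀ ⦃i j : I⦄ (h : i ≤ j), π h (x j) = x i} :=
    isCompact_iff_compactSpace.mp (hLSclosed.isCompact)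
  let μL : Measure {x : ∀ i, X i // ∀ ⦃i j : I⦄ (h : i ≤ j), π h (x j) = x i} :=
    Measure.comap Subtype.val ν
  have hμL_apply : ∀ s, μL s = ν (Subtype.val '' s) := fun s => hemb.comap_apply ν s
  have hdropL : ∀ S : Set (∀ j, X j), ν (S ∩ LS) = ν S := by
    intro S
    refine le_antisymm (measure_mono inter_subset_left) ?_
    calc ν S = ν ((S ∩ LS) ∪ (S ∩ LSᶜ)) := by rw [Set.inter_union_compl]
      _ ≤ ν (S ∩ LS) + ν (S ∩ LSᶜ) := measure_union_le _ _
      _ ≤ ν (S ∩ LS) + 0 := by gcongr; exact le_trans (measure_mono inter_subset_right) hνLc.le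
      _ = ν (S ∩ LS) := by rw [add_zero]
  have hνLS : ν LS = 1 := by
    have h := hdropL Set.univ
    rw [Set.univ_inter, hν_univ] at h
    exact h
  have hμLuniv : μL Set.univ = 1 := by
    rw [hμL_apply, Set.image_univ, hrange, hνLS]
  have hCE : Topology.IsClosedEmbedding
      (Subtype.val : {x : ∀ i, X i // ∀ ⦃i j : I⦄ (h : i ≤ j), π h (x j) = x i} → ∀ j, X j) :=
    Topology.IsClosedEmbedding.subtypeVal hLSclosed
  refine ⟨μL, ⟨hμLuniv⟩, ?_, ?_⟩
  · -- regular
    haveI hfin : IsFiniteMeasureOnCompacts μL := by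
      refine ⟨fun K _ => ?_⟩
      calc μL K ≤ μL Set.univ := measure_mono (Set.subset_univ K)
        _ = 1 := hμLuniv
        _ < ⊤ := ENNReal.one_lt_top
    haveI houter : μL.OuterRegular := by
      refine ⟨fun A hA r hr => ?_⟩
      rw [hμL_apply] at hr
      obtain ⟨W, hWsup, hWopen, hWlt⟩ :=
        Set.exists_isOpen_lt_of_lt (Subtype.val '' A) r hr
      refine ⟨Subtype.val ⁻¹' W, ?_, hWopen.preimage continuous_subtype_val, ?_⟩
      · intro x hx
        exact hWsup (Set.mem_image_of_mem _ hx)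
      · rw [hμL_apply, Set.image_preimage_eq_inter_range, hrange]
        exact lt_of_le_of_lt (measure_mono Set.inter_subset_left) hWlt
    refine ⟨fun V hV r hr => ?_⟩
    obtain ⟨W, hWopen, hWpre⟩ := isOpen_induced_iff.mp hV
    rw [hμL_apply, ← hWpre, Set.image_preimage_eq_inter_range, hrange] at hr
    have hr2 : r < ν W := lt_of_lt_of_le hr (measure_mono Set.inter_subset_left)
    obtain ⟨K, hKW, hKcomp, hKgt⟩ := hνreg.innerRegular hWopen r hr2
    refine ⟨Subtype.val ⁻¹' K, ?_, ?_, ?_⟩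
    · rw [← hWpre]
      exact Set.preimage_mono hKW
    · exact hCE.isInducing.isCompact_preimage hCE.isClosed_range hKcomp
    · rw [hμL_apply, Set.image_preimage_eq_inter_range, hrange, hdropL]
      exact hKgt
  · -- invariance
    intro g
    set T : {x : ∀ i, X i // ∀ ⦃i j : I⦄ (h : i ≤ j), π h (x j) = x i} →
        {x : ∀ i, X i // ∀ ⦃i j : I⦄ (h : i ≤ j), π h (x j) = x i} :=
      fun x => (⟨fun i => g • x.1 i,
        fun i j h => (hπequiv g h (x.1 j)).trans (congrArg (fun y => g • y) (x.2 h))⟩ :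
        {x : ∀ i, X i // ∀ ⦃i j : I⦄ (h : i ≤ j), π h (x j) = x i}) with hT
    have hTcont : Continuous T := by
      refine Continuous.subtype_mk ?_ _
      refine continuous_pi fun i => ?_
      exact (continuous_smul.comp (continuous_const.prodMk continuous_id)).comp
        ((continuous_apply i).comp continuous_subtype_val)
    have hTmeas : Measurable T := hTcont.measurable
    refine Measure.ext fun A hA => ?_
    rw [Measure.map_apply hTmeas hA, hμL_apply, hμL_apply]
    have him : Subtype.val '' (T ⁻¹' A)
        = ((fun z : ∀ j, X j => g • z) ⁻¹' (Subtype.val '' A)) ∩ LS := by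
      ext z
      constructor
      · rintro ⟨x, hx, rfl⟩
        refine ⟨⟨T x, hx, rfl⟩, x.2⟩
      · rintro ⟨⟨y, hyA, hy⟩, hzLS⟩
        refine ⟨⟨z, hzLS⟩, ?_, rfl⟩
        have : T ⟨z, hzLS⟩ = y := by
          apply Subtype.ext
          exact hy.symm
        rw [Set.mem_preimage, this]
        exact hyA
    have hAim : MeasurableSet (Subtype.val '' A) := hemb.measurableSet_image' hA
    rw [him, hdropL, hνinv g _ hAim]
end

section
/- Let G be a countable discrete group acting by homeomorphisms on the Cantor space C = {0,1}^ℕ, and suppose the action is amenable, witnessed by continuous maps bⁿ : C → P(G). Then there exist maps (bⁿ)' : C → P(G), each locally constant with finite image (constant on the members of a finite clopen partition of C), such that sup_{x∈C} ‖bⁿ_x − (bⁿ)'_x‖₁ ≤ 2/n and for every g ∈ G, lim_{n→∞} sup_{x∈C} ‖g·(bⁿ)'_x − (bⁿ)'_{g·x}‖₁ = 0. -/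
set_option maxHeartbeats 1000000

open MeasureTheory Filter Topology

/-- The space `P(G)` of probability measures on a (countable discrete) group `G`,
viewed inside `ℓ¹(G)`; it carries the weak topology (of pointwise convergence),
which on `P(G)` coincides with the `ℓ¹`-norm topology. -/
abbrev ProbOn (G : Type) : Type :=
  {f : G → ℝ // (∀ g : G, 0 ≤ f g) ∧ HasSum f 1}

/-- The left translation action of `G` on `P(G)`: `(g • p) h = p (g⁻¹ h)`. -/
noncomputable instance ProbOn.instSMul (G : Type) [Group G] : SMul G (ProbOn G) where
  smul g p := ⟨fun h => p.1 (g⁻¹ * h), fun h => p.2.1 _, by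
    have := ((Equiv.mulLeft g⁻¹).hasSum_iff (f := p.1) (a := 1)).mpr p.2.2
    exact this⟩

/-- The `ℓ¹` distance between two elements of `P(G)`. -/
noncomputable def l1dist {G : Type} (p q : ProbOn G) : ℝ :=
  ∑' g : G, |p.1 g - q.1 g|

/-- An action of a (discrete) group `G` by homeomorphisms on a topological space `X` is
amenable if there is a sequence of continuous maps `bⁿ : X → P(G)` such that for every
`g ∈ G`, `lim_n sup_{x ∈ X} ‖g • bⁿ_x − bⁿ_{g•x}‖₁ = 0`. -/
def AmenableActionOn (G : Type) [Group G] (X : Type) [TopologicalSpace X]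
    [MulAction G X] : Prop :=
  (∀ g : G, Continuous fun x : X => g • x) ∧
  ∃ b : ℕ → C(X, ProbOn G), ∀ g : G,
    Tendsto (fun n : ℕ => ⨆ x : X, l1dist (g • (b n) x) ((b n) (g • x)))
      atTop (𝓝 0)

/-- A group `G` is amenable at infinity (topologically amenable) if it admits an amenable
action on some nonempty compact Hausdorff space. -/
def AmenableAtInfinity (G : Type) [Group G] : Prop :=
  ∃ (X : Type) (tX : TopologicalSpace X) (aX : MulAction G X),
    @CompactSpace X tX ∧ @T2Space X tX ∧ Nonempty X ∧
      @AmenableActionOn G _ X tX aX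

section Aux

variable {G : Type}

lemma summable_abs_sub (p q : ProbOn G) : Summable fun g => |p.1 g - q.1 g| :=
  (p.2.2.summable.sub q.2.2.summable).abs

lemma l1dist_nonneg (p q : ProbOn G) : 0 ≤ l1dist p q :=
  tsum_nonneg fun _ => abs_nonneg _

lemma l1dist_le_two (p q : ProbOn G) : l1dist p q ≤ 2 := by
  have h := Summable.tsum_le_tsum (fun g => by
      have := abs_sub (p.1 g) (q.1 g)
      rwa [abs_of_nonneg (p.2.1 g), abs_of_nonneg (q.2.1 g)] at this)
    (summable_abs_sub p q) (p.2.2.summable.add q.2.2.summable)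
  calc l1dist p q ≤ ∑' g, (p.1 g + q.1 g) := h
    _ = 2 := by rw [(p.2.2.add q.2.2).tsum_eq]; norm_num

lemma l1dist_comm (p q : ProbOn G) : l1dist p q = l1dist q p := by
  unfold l1dist; simp_rw [abs_sub_comm]

lemma l1dist_triangle (p q r : ProbOn G) : l1dist p r ≤ l1dist p q + l1dist q r := by
  rw [l1dist, l1dist, l1dist, ← Summable.tsum_add (summable_abs_sub p q) (summable_abs_sub q r)]
  exact Summable.tsum_le_tsum (fun g => abs_sub_le _ _ _) (summable_abs_sub p r)
    ((summable_abs_sub p q).add (summable_abs_sub q r))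

lemma l1dist_smul [Group G] (g : G) (p q : ProbOn G) :
    l1dist (g • p) (g • q) = l1dist p q := by
  show ∑' h : G, |p.1 (g⁻¹ * h) - q.1 (g⁻¹ * h)| = _
  exact (Equiv.mulLeft g⁻¹).tsum_eq fun h => |p.1 h - q.1 h|

lemma key_step (f : C(ℕ → Bool, ProbOn G)) {ε : ℝ} (hε : 0 < ε) (x : ℕ → Bool) :
    ∃ V : Set (ℕ → Bool), IsClopen V ∧ x ∈ V ∧
      ∀ y ∈ V, l1dist (f y) (f x) ≤ 2 * ε := by
  classical
  set p := f x with hp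
  obtain ⟨F, hF⟩ : ∃ F : Finset G, 1 - ε/2 < ∑ g ∈ F, p.1 g :=
    (p.2.2.eventually (Ioi_mem_nhds (show 1 - ε/2 < 1 by linarith))).exists
  set δ := ε / (2 * (F.card + 1)) with hδ
  have hδpos : 0 < δ := by positivity
  set U := {y : ℕ → Bool | ∀ g ∈ F, |(f y).1 g - p.1 g| < δ} with hU
  have hUopen : IsOpen U := by
    have : U = ⋂ g ∈ F, {y | |(f y).1 g - p.1 g| < δ} := by ext y; simp [hU]
    rw [this]
    refine isOpen_biInter_finset fun g _ => ?_
    have hc : Continuous fun y => |(f y).1 g - p.1 g| :=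
      (((continuous_apply g).comp (continuous_subtype_val.comp f.continuous)).sub
        continuous_const).abs
    exact isOpen_lt hc continuous_const
  have hxU : x ∈ U := fun g _ => by rw [← hp, sub_self, abs_zero]; exact hδpos
  obtain ⟨V, hVclopen, hxV, hVU⟩ :=
    isTopologicalBasis_isClopen.exists_subset_of_mem_open hxU hUopen
  refine ⟨V, hVclopen, hxV, fun y hy => ?_⟩
  set q := f y with hq
  have hyU : y ∈ U := hVU hy
  have hS1 : ∑ g ∈ F, |q.1 g - p.1 g| ≤ F.card * δ := by
    calc ∑ g ∈ F, |q.1 g - p.1 g| ≤ ∑ _g ∈ F, δ :=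
          Finset.sum_le_sum fun g hg => (hyU g hg).le
      _ = F.card * δ := by rw [Finset.sum_const, nsmul_eq_mul]
  have hcd : (F.card : ℝ) * δ ≤ ε / 2 := by
    have h1 : (0:ℝ) ≤ F.card := Nat.cast_nonneg _
    have h2 : (0:ℝ) < 2*((F.card:ℝ)+1) := by linarith
    rw [hδ, mul_div_assoc', div_le_div_iff₀ h2 two_pos]
    nlinarith
  have hsplit := Summable.sum_add_tsum_compl (s := F) (summable_abs_sub q p)
  have hpsplit := Summable.sum_add_tsum_compl (s := F) p.2.2.summable
  have hqsplit := Summable.sum_add_tsum_compl (s := F) q.2.2.summable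
  rw [p.2.2.tsum_eq] at hpsplit
  rw [q.2.2.tsum_eq] at hqsplit
  have hqF : ∑ g ∈ F, p.1 g - ∑ g ∈ F, |q.1 g - p.1 g| ≤ ∑ g ∈ F, q.1 g := by
    rw [← Finset.sum_sub_distrib]
    refine Finset.sum_le_sum fun g hg => ?_
    have := neg_abs_le (q.1 g - p.1 g)
    linarith [abs_nonneg (q.1 g - p.1 g)]
  have htail : (∑' g : ↥(↑F : Set G)ᶜ, |q.1 g - p.1 g|) ≤
      (∑' g : ↥(↑F : Set G)ᶜ, q.1 g) + (∑' g : ↥(↑F : Set G)ᶜ, p.1 g) := by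
    have hA : Summable fun g : ↥(↑F : Set G)ᶜ => q.1 ↑g := q.2.2.summable.subtype _
    have hB : Summable fun g : ↥(↑F : Set G)ᶜ => p.1 ↑g := p.2.2.summable.subtype _
    rw [← Summable.tsum_add hA hB]
    refine Summable.tsum_le_tsum (fun g => ?_) ((summable_abs_sub q p).subtype _)
      (hA.add hB)
    have := abs_sub (q.1 g) (p.1 g)
    rwa [abs_of_nonneg (q.2.1 _), abs_of_nonneg (p.2.1 _)] at this
  have hl : l1dist q p = ∑ g ∈ F, |q.1 g - p.1 g| + ∑' g : ↥(↑F : Set G)ᶜ, |q.1 g - p.1 g| :=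
    hsplit.symm
  rw [hl]
  linarith

lemma exists_locConst_approx (f : C(ℕ → Bool, ProbOn G)) {ε : ℝ} (hε : 0 < ε) :
    ∃ f' : (ℕ → Bool) → ProbOn G, IsLocallyConstant f' ∧ (Set.range f').Finite ∧
      ∀ x, l1dist (f x) (f' x) ≤ 2 * ε := by
  classical
  choose V hVclopen hmemV happrox using key_step f hε
  obtain ⟨t, ht⟩ := isCompact_univ.elim_finite_subcover V (fun x => (hVclopen x).isOpen)
    (fun x _ => Set.mem_iUnion.mpr ⟨x, hmemV x⟩)
  set l := t.toList with hl
  set k := l.length with hk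
  have hex : ∀ x : ℕ → Bool, ∃ i : Fin k, x ∈ V (l.get i) := by
    intro x
    obtain ⟨c, hct, hxc⟩ := Set.mem_iUnion₂.mp (ht (Set.mem_univ x))
    obtain ⟨i, hi⟩ := List.mem_iff_get.mp (Finset.mem_toList.mpr hct)
    exact ⟨i, hi ▸ hxc⟩
  set S : (ℕ → Bool) → Finset (Fin k) :=
    fun x => Finset.univ.filter (fun i => x ∈ V (l.get i)) with hS
  have hSne : ∀ x, (S x).Nonempty := fun x => by
    obtain ⟨i, hi⟩ := hex x; exact ⟨i, by simp only [hS, Finset.mem_filter, Finset.mem_univ, true_and]; exact hi⟩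
  set ι : (ℕ → Bool) → Fin k := fun x => (S x).min' (hSne x) with hι
  have hιmem : ∀ x, x ∈ V (l.get (ι x)) := fun x => by
    have := (S x).min'_mem (hSne x); exact (Finset.mem_filter.mp this).2
  refine ⟨fun x => f (l.get (ι x)), ?_, ?_, ?_⟩
  · rw [IsLocallyConstant.iff_exists_open]
    intro x
    refine ⟨V (l.get (ι x)) ∩
        ⋂ j ∈ Finset.univ.filter (fun j : Fin k => j < ι x), (V (l.get j))ᶜ, ?_, ?_, ?_⟩
    · exact (hVclopen _).isOpen.inter
        (isOpen_biInter_finset fun j _ => (hVclopen _).compl.isOpen)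
    · refine ⟨hιmem x, Set.mem_iInter₂.mpr fun j hj => ?_⟩
      simp only [Finset.mem_filter, Finset.mem_univ, true_and] at hj
      intro hmem
      have hle : ι x ≤ j := Finset.min'_le _ _ (by simp only [hS, Finset.mem_filter, Finset.mem_univ, true_and]; exact hmem)
      exact absurd hj (not_lt.mpr hle)
    · intro y hy
      have h2 : ι y ≤ ι x := Finset.min'_le _ _ (by simp only [hS, Finset.mem_filter, Finset.mem_univ, true_and]; exact hy.1)
      have h3 : ¬ ι y < ι x := by
        intro hlt
        have : y ∈ (V (l.get (ι y)))ᶜ :=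
          Set.mem_iInter₂.mp hy.2 (ι y) (by simp [hlt])
        exact this (hιmem y)
      have heq : ι y = ι x := le_antisymm h2 (not_lt.mp h3)
      show f (l.get (ι y)) = f (l.get (ι x))
      rw [heq]
  · exact (Set.finite_range fun i : Fin k => f (l.get i)).subset
      (Set.range_comp_subset_range ι fun i => f (l.get i))
  · intro x
    exact happrox (l.get (ι x)) x (hιmem x)

end Aux

set_option synthInstance.maxHeartbeats 1000000 in
/-- If a countable discrete group `G` acts amenably by homeomorphisms on the Cantor space
`C = {0,1}^ℕ`, witnessed by continuous maps `bⁿ : C → P(G)`, then the `bⁿ` can be replaced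
by locally constant maps `(bⁿ)'` (constant on the members of a finite clopen partition,
i.e. locally constant with finite image) with `sup_x ‖bⁿ_x − (bⁿ)'_x‖₁ ≤ 2/n` and still
witnessing amenability of the action. -/
theorem amenable_action_on_cantor_locally_constant_approx
    (G : Type) [Group G] [Countable G]
    [MulAction G (ℕ → Bool)]
    (hcont : ∀ g : G, Continuous fun x : ℕ → Bool => g • x)
    (b : ℕ → C(ℕ → Bool, ProbOn G))
    (hb : ∀ g : G,
      Tendsto (fun n : ℕ => ⨆ x : ℕ → Bool, l1dist (g • (b n) x) ((b n) (g • x)))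
        atTop (𝓝 0)) :
    ∃ b' : ℕ → (ℕ → Bool) → ProbOn G,
      (∀ n : ℕ, IsLocallyConstant (b' n) ∧ (Set.range (b' n)).Finite) ∧
      (∀ n : ℕ, 0 < n → ∀ x : ℕ → Bool, l1dist ((b n) x) (b' n x) ≤ 2 / (n : ℝ)) ∧
      (∀ g : G,
        Tendsto (fun n : ℕ => ⨆ x : ℕ → Bool, l1dist (g • b' n x) (b' n (g • x)))
          atTop (𝓝 0)) := by
  have happ : ∀ n : ℕ, ∃ f' : (ℕ → Bool) → ProbOn G, IsLocallyConstant f' ∧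
      (Set.range f').Finite ∧ ∀ x, l1dist (b n x) (f' x) ≤ 2 * (1/((n:ℝ)+1)) := fun n =>
    exists_locConst_approx (b n) (by positivity)
  choose b' hlc hfin hap using happ
  refine ⟨b', fun n => ⟨hlc n, hfin n⟩, ?_, ?_⟩
  · intro n hn x
    refine (hap n x).trans ?_
    have h0 : (0:ℝ) < n := by exact_mod_cast hn
    rw [mul_one_div]
    apply div_le_div_of_nonneg_left (by norm_num) h0
    linarith
  · intro g
    refine squeeze_zero (g := fun n =>
        (⨆ x : ℕ → Bool, l1dist (g • (b n) x) ((b n) (g • x))) + 4 * (1/((n:ℝ)+1)))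
      (fun n => Real.iSup_nonneg fun x => l1dist_nonneg _ _) (fun n => ?_) ?_
    · refine ciSup_le fun x => ?_
      have bdd : BddAbove (Set.range fun x : ℕ → Bool =>
          l1dist (g • (b n) x) ((b n) (g • x))) :=
        ⟨2, by rintro r ⟨x, rfl⟩; exact l1dist_le_two _ _⟩
      have h1 : l1dist (g • b' n x) (b' n (g • x)) ≤
          l1dist (g • b' n x) (g • (b n) x) + l1dist (g • (b n) x) ((b n) (g • x))
            + l1dist ((b n) (g • x)) (b' n (g • x)) := by
        calc l1dist (g • b' n x) (b' n (g • x)) ≤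
            l1dist (g • b' n x) ((b n) (g • x)) + l1dist ((b n) (g • x)) (b' n (g • x)) :=
              l1dist_triangle _ _ _
          _ ≤ _ := by
              have := l1dist_triangle (g • b' n x) (g • (b n) x) ((b n) (g • x))
              linarith
      have h2 : l1dist (g • b' n x) (g • (b n) x) = l1dist (b' n x) ((b n) x) :=
        l1dist_smul g _ _
      have h3 : l1dist (b' n x) ((b n) x) ≤ 2 * (1/((n:ℝ)+1)) := by
        rw [l1dist_comm]; exact hap n x
      have h4 : l1dist ((b n) (g • x)) (b' n (g • x)) ≤ 2 * (1/((n:ℝ)+1)) := hap n (g • x)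
      have h5 : l1dist (g • (b n) x) ((b n) (g • x)) ≤
          ⨆ x : ℕ → Bool, l1dist (g • (b n) x) ((b n) (g • x)) := le_ciSup bdd x
      linarith
    · have h6 : Tendsto (fun n : ℕ => 4 * (1/((n:ℝ)+1))) atTop (𝓝 0) := by
        have : Tendsto (fun n : ℕ => 1/((n:ℝ)+1)) atTop (𝓝 0) := tendsto_one_div_add_atTop_nhds_zero_nat
        simpa using this.const_mul 4
      simpa using (hb g).add h6
end

section
/- There exists a separable compact Hausdorff space X (not necessarily metrizable) that is a test space for extreme amenability of Polish groups: a Polish group G is extremely amenable if and only if every continuous action of G on X has a fixed point. -/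
set_option linter.unusedSectionVars false

open TopologicalSpace Set Cardinal

/-- Hewitt–Marczewski–Pondiczery: a product of separable spaces indexed by a set of
cardinality at most continuum is separable. -/
theorem hmp_separable {ι : Type} (e : ι → (ℕ → Bool)) (he : Function.Injective e)
    (X : ι → Type) [∀ i, TopologicalSpace (X i)] [∀ i, SeparableSpace (X i)]
    [∀ i, Nonempty (X i)] : SeparableSpace (∀ i, X i) := by
  classical
  have hd : ∀ i, ∃ u : ℕ → X i, DenseRange u := fun i => exists_dense_seq (X i)
  choose d hdd using hd
  refine SeparableSpace.of_denseRange
    (ι := Σ k : ℕ, ((Fin k → Bool) → ℕ))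
    (fun p i => d i (p.2 fun m => e i m.1)) ?_
  rw [DenseRange, dense_iff_inter_open]
  rintro U hU ⟨x, hx⟩
  obtain ⟨I, u, h1, h2⟩ := isOpen_pi_iff.1 hU x hx
  -- a level `k` below which the codes of elements of `I` are pairwise distinct
  have sep : ∀ i ∈ I, ∀ j ∈ I, i ≠ j → ∃ m, e i m ≠ e j m := by
    intro i _ j _ hij
    by_contra h
    push_neg at h
    exact hij (he (funext h))
  set N : ι → ι → ℕ := fun i j => if h : ∃ m, e i m ≠ e j m then Nat.find h else 0 with hN
  set k : ℕ := (I.sup fun i => I.sup fun j => N i j) + 1 with hk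
  have kinj : ∀ i ∈ I, ∀ j ∈ I, (fun m : Fin k => e i m.1) = (fun m : Fin k => e j m.1) → i = j := by
    intro i hi j hj hij
    by_contra hne
    obtain h := sep i hi j hj hne
    have hNk : N i j < k := by
      have : N i j ≤ I.sup fun i => I.sup fun j => N i j :=
        le_trans (Finset.le_sup (f := fun j => N i j) hj)
          (Finset.le_sup (f := fun i => I.sup fun j => N i j) hi)
      omega
    have : e i (N i j) ≠ e j (N i j) := by
      rw [hN]; simp only [dif_pos h]; exact Nat.find_spec h
    exact this (congrFun hij ⟨N i j, hNk⟩)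
  have hm : ∀ i ∈ I, ∃ m, d i m ∈ u i := fun i hi =>
    (hdd i).exists_mem_open (h1 i hi).1 ⟨x i, (h1 i hi).2⟩
  set pick : (Fin k → Bool) → ℕ := fun π =>
    if hp : ∃ i, i ∈ I ∧ (fun m : Fin k => e i m.1) = π then
      Classical.choose (hm (Classical.choose hp) (Classical.choose_spec hp).1)
    else 0 with hpick
  refine ⟨fun i => d i (pick fun m => e i m.1), h2 ?_, ⟨⟨k, pick⟩, rfl⟩⟩
  rw [Set.mem_pi]
  intro i hi
  set π : Fin k → Bool := fun m => e i m.1 with hπ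
  have hp : ∃ i', i' ∈ I ∧ (fun m : Fin k => e i' m.1) = π := ⟨i, hi, rfl⟩
  have hIp := (Classical.choose_spec hp).1
  have heq : Classical.choose hp = i := kinj _ hIp i hi (Classical.choose_spec hp).2
  simp only [hpick, dif_pos hp]
  rw [← heq]
  exact Classical.choose_spec (hm _ hIp)

noncomputable section




section Flow

variable (G : Type) [Group G] [TopologicalSpace G] [IsTopologicalGroup G] [PolishSpace G]
variable {Z : Type} [TopologicalSpace Z] [CompactSpace Z] [T2Space Z] [Nonempty Z]
  [MulAction G Z] [ContinuousSMul G Z]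

/-- The map from `Z` to `ℝ^ℕ` recording the values of the functions `f₀ m` along the
translates of `x` by a dense sequence in `G`. -/
def pmap (f₀ : ℕ → C(Z, ℝ)) : Z → (ℕ → ℝ) :=
  fun x n => f₀ n.unpair.2 (denseSeq G n.unpair.1 • x)

lemma pmap_continuous (f₀ : ℕ → C(Z, ℝ)) : Continuous (pmap G f₀) :=
  continuous_pi fun n => (f₀ n.unpair.2).continuous.comp (continuous_const_smul _)

lemma ext_smul (f : C(Z, ℝ)) {x x' : Z}
    (h : ∀ n : ℕ, f (denseSeq G n • x) = f (denseSeq G n • x')) :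
    ∀ g : G, f (g • x) = f (g • x') := by
  have hc1 : Continuous fun g : G => f (g • x) :=
    f.continuous.comp (continuous_id.smul continuous_const)
  have hc2 : Continuous fun g : G => f (g • x') :=
    f.continuous.comp (continuous_id.smul continuous_const)
  have := Continuous.ext_on (denseRange_denseSeq G) hc1 hc2 ?_
  · exact fun g => congrFun this g
  · rintro _ ⟨n, rfl⟩
    exact h n

lemma pmap_eq (f₀ : ℕ → C(Z, ℝ)) {x x' : Z} (h : pmap G f₀ x = pmap G f₀ x') (g : G) :
    pmap G f₀ (g • x) = pmap G f₀ (g • x') := by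
  funext n
  have key := ext_smul G (f₀ n.unpair.2) (x := x) (x' := x') (fun m => by
    have := congrFun h (Nat.pair m n.unpair.2)
    simpa [pmap, Nat.unpair_pair] using this)
  show f₀ n.unpair.2 (denseSeq G n.unpair.1 • g • x) = f₀ n.unpair.2 (denseSeq G n.unpair.1 • g • x')
  rw [← mul_smul, ← mul_smul]
  exact key _

lemma fix_transfer (f₀ : ℕ → C(Z, ℝ)) {x : Z}
    (h : ∀ g : G, pmap G f₀ (g • x) = pmap G f₀ x) (g : G) (m : ℕ) :
    f₀ m (g • x) = f₀ m x := by
  have key := ext_smul G (f₀ m) (x := g • x) (x' := x) (fun n => by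
    have := congrFun (h g) (Nat.pair n m)
    simpa [pmap, Nat.unpair_pair] using this)
  simpa using key 1

/-- The compact metrizable flow associated to a countable family of functions. -/
def Yset (f₀ : ℕ → C(Z, ℝ)) : Set (ℕ → ℝ) := Set.range (pmap G f₀)

lemma Yset_compact (f₀ : ℕ → C(Z, ℝ)) : IsCompact (Yset G f₀) :=
  isCompact_range (pmap_continuous G f₀)

lemma Yset_nonempty (f₀ : ℕ → C(Z, ℝ)) : (Yset G f₀).Nonempty :=
  Set.range_nonempty _

/-- The action of `G` on `Yset G f₀`. -/
def act (f₀ : ℕ → C(Z, ℝ)) (g : G) (y : Yset G f₀) : Yset G f₀ :=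
  ⟨pmap G f₀ (g • Classical.choose y.2), Set.mem_range_self _⟩

lemma act_eq (f₀ : ℕ → C(Z, ℝ)) (g : G) (x : Z) (y : Yset G f₀)
    (hy : y.1 = pmap G f₀ x) : (act G f₀ g y).1 = pmap G f₀ (g • x) := by
  have hc : pmap G f₀ (Classical.choose y.2) = pmap G f₀ x :=
    (Classical.choose_spec y.2).trans hy
  exact pmap_eq G f₀ hc g

lemma act_one (f₀ : ℕ → C(Z, ℝ)) (y : Yset G f₀) : act G f₀ 1 y = y := by
  apply Subtype.ext
  show pmap G f₀ ((1 : G) • Classical.choose y.2) = y.1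
  rw [one_smul]
  exact Classical.choose_spec y.2

lemma act_mul (f₀ : ℕ → C(Z, ℝ)) (g h : G) (y : Yset G f₀) :
    act G f₀ (g * h) y = act G f₀ g (act G f₀ h y) := by
  apply Subtype.ext
  have h1 : (act G f₀ h y).1 = pmap G f₀ (h • Classical.choose y.2) := rfl
  rw [act_eq G f₀ g _ _ h1]
  show pmap G f₀ ((g * h) • Classical.choose y.2) = _
  rw [mul_smul]

lemma act_continuous (f₀ : ℕ → C(Z, ℝ)) :
    Continuous fun p : G × Yset G f₀ => act G f₀ p.1 p.2 := by
  have hp : Continuous (pmap G f₀) := pmap_continuous G f₀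
  have hPc : Continuous (fun x : Z => (⟨pmap G f₀ x, Set.mem_range_self _⟩ : Yset G f₀)) :=
    hp.subtype_mk _
  have hPs : Function.Surjective
      (fun x : Z => (⟨pmap G f₀ x, Set.mem_range_self _⟩ : Yset G f₀)) := by
    rintro ⟨_, x, rfl⟩
    exact ⟨x, rfl⟩
  have hq : Topology.IsQuotientMap (Prod.map (id : G → G)
      (fun x : Z => (⟨pmap G f₀ x, Set.mem_range_self _⟩ : Yset G f₀))) := by
    refine IsClosedMap.isQuotientMap ?_ (continuous_id.prodMap hPc) ?_
    · exact (IsProperMap.prodMap isProperMap_id hPc.isProperMap).isClosedMap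
    · exact Function.Surjective.prodMap Function.surjective_id hPs
  rw [hq.continuous_iff]
  have heq : (fun p : G × Z => act G f₀ p.1 ⟨pmap G f₀ p.2, Set.mem_range_self _⟩) =
      fun p : G × Z => (⟨pmap G f₀ (p.1 • p.2), Set.mem_range_self _⟩ : Yset G f₀) := by
    funext p
    exact Subtype.ext (act_eq G f₀ p.1 p.2 _ rfl)
  show Continuous fun p : G × Z => act G f₀ p.1 ⟨pmap G f₀ p.2, Set.mem_range_self _⟩
  rw [heq]
  exact (hp.comp continuous_smul).subtype_mk _

lemma exists_bad (hZ : ∀ z : Z, ∃ g : G, g • z ≠ z) :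
    ∃ f₀ : ℕ → C(Z, ℝ), ∀ y : Yset G f₀, ∃ g : G, act G f₀ g y ≠ y := by
  by_contra hcon
  push_neg at hcon
  set Fx : (ℕ → C(Z, ℝ)) → Set Z :=
    fun f₀ => {x | ∀ (g : G) (m : ℕ), f₀ m (g • x) = f₀ m x} with hFx
  have hclosed : ∀ f₀, IsClosed (Fx f₀) := by
    intro f₀
    have : Fx f₀ = ⋂ (g : G) (m : ℕ), {x | f₀ m (g • x) = f₀ m x} := by
      ext x
      simp [hFx, Set.mem_iInter]
    rw [this]
    exact isClosed_iInter fun g => isClosed_iInter fun m =>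
      isClosed_eq ((f₀ m).continuous.comp (continuous_const_smul g)) (f₀ m).continuous
  have hne : ∀ f₀, (Fx f₀).Nonempty := by
    intro f₀
    obtain ⟨y, hy⟩ := hcon f₀
    refine ⟨Classical.choose y.2, fun g m => ?_⟩
    have hfix : ∀ g : G, pmap G f₀ (g • Classical.choose y.2) =
        pmap G f₀ (Classical.choose y.2) := by
      intro g
      have h1 : (act G f₀ g y).1 = y.1 := congrArg Subtype.val (hy g)
      calc pmap G f₀ (g • Classical.choose y.2) = y.1 := h1
        _ = pmap G f₀ (Classical.choose y.2) := (Classical.choose_spec y.2).symm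
    exact fix_transfer G f₀ hfix g m
  have hdir : Directed (· ⊇ ·) Fx := by
    intro a b
    refine ⟨fun n => if Even n then a (n / 2) else b (n / 2), ?_, ?_⟩
    · intro x hx g m
      have h1 := hx g (2 * m)
      have he : Even (2 * m) := ⟨m, two_mul m⟩
      have e1 : 2 * m / 2 = m := by omega
      simp only [if_pos he, e1] at h1
      exact h1
    · intro x hx g m
      have h1 := hx g (2 * m + 1)
      have he : ¬ Even (2 * m + 1) := by simp [parity_simps]
      have e1 : (2 * m + 1) / 2 = m := by omega
      simp only [if_neg he, e1] at h1
      exact h1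
  obtain ⟨x, hx⟩ := IsCompact.nonempty_iInter_of_directed_nonempty_isCompact_isClosed
    Fx hdir hne (fun f₀ => (hclosed f₀).isCompact) hclosed
  have hfixed : ∀ g : G, g • x = x := by
    intro g
    by_contra hg
    obtain ⟨f, hf0, hf1, -⟩ := exists_continuous_zero_one_of_isClosed
      (isClosed_singleton (x := x)) (isClosed_singleton (x := g • x))
      (by rw [Set.disjoint_singleton]; exact fun h => hg h.symm)
    have hxf := Set.mem_iInter.1 hx (fun _ => f)
    have h1 : f (g • x) = f x := hxf g 0
    have h2 : f (g • x) = 1 := hf1 rfl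
    have h3 : f x = 0 := hf0 rfl
    rw [h2, h3] at h1
    norm_num at h1
  obtain ⟨g, hg⟩ := hZ x
  exact hg (hfixed g)

end Flow



section Embed

/-- The index type: nonempty compact subsets of `ℝ^ℕ`. -/
abbrev TestIdx : Type := {C : Set (ℕ → ℝ) // IsCompact C ∧ C.Nonempty}

/-- The test space: the product of all nonempty compact subsets of `ℝ^ℕ`. -/
abbrev TestSpace : Type := ∀ C : TestIdx, ↥C.1

lemma exists_embed : ∃ e : TestIdx → (ℕ → Bool), Function.Injective e := by
  letI m : MetricSpace (ℕ → ℝ) := TopologicalSpace.metrizableSpaceMetric (ℕ → ℝ)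
  have hu : DenseRange (denseSeq (ℕ → ℝ)) := denseRange_denseSeq _
  have hinj : Function.Injective (fun C : TestIdx =>
      fun n => Metric.infDist (denseSeq (ℕ → ℝ) n) C.1) := by
    intro C D h
    apply Subtype.ext
    have heq : (fun z => Metric.infDist z C.1) = fun z => Metric.infDist z D.1 :=
      Continuous.ext_on hu (Metric.continuous_infDist_pt _) (Metric.continuous_infDist_pt _)
        (by rintro _ ⟨n, rfl⟩; exact congrFun h n)
    ext z
    rw [C.2.1.isClosed.mem_iff_infDist_zero C.2.2, D.2.1.isClosed.mem_iff_infDist_zero D.2.2,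
      congrFun heq z]
  have h1 : #TestIdx ≤ #(ℕ → ℝ) := Cardinal.mk_le_of_injective hinj
  have h2 : #(ℕ → ℝ) = Cardinal.continuum := by
    rw [← Cardinal.power_def, Cardinal.mk_real, Cardinal.mk_nat, Cardinal.continuum_power_aleph0]
  have h3 : #(ℕ → Bool) = Cardinal.continuum := by
    rw [← Cardinal.power_def, Cardinal.mk_bool, Cardinal.mk_nat, Cardinal.two_power_aleph0]
  have h4 : #TestIdx ≤ #(ℕ → Bool) := by rw [h3, ← h2]; exact h1
  obtain ⟨e⟩ := (Cardinal.le_def _ _).1 h4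
  exact ⟨e, e.injective⟩

end Embed

/-- There exists a separable compact Hausdorff space `X` (not necessarily metrizable) which
is a test space for extreme amenability of Polish groups: a Polish group `G` is extremely
amenable if and only if every continuous action of `G` on `X` has a fixed point. -/
theorem exists_separable_compact_test_space_for_extreme_amenability :
    ∃ (X : Type) (tX : TopologicalSpace X),
      @CompactSpace X tX ∧ @T2Space X tX ∧ @TopologicalSpace.SeparableSpace X tX ∧
      ∀ (G : Type) [Group G] [TopologicalSpace G] [IsTopologicalGroup G] [PolishSpace G],
        (ExtremelyAmenable G ↔
          ∀ aX : MulAction G X, @ContinuousSMul G X aX.toSMul _ tX →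
            ∃ x : X, ∀ g : G, @SMul.smul G X aX.toSMul g x = x) := by
  classical
  haveI hcs : ∀ C : TestIdx, CompactSpace ↥C.1 := fun C => isCompact_iff_compactSpace.1 C.2.1
  haveI hns : ∀ C : TestIdx, Nonempty ↥C.1 := fun C => C.2.2.to_subtype
  refine ⟨TestSpace, inferInstance, inferInstance, inferInstance, ?_, ?_⟩
  · obtain ⟨e, he⟩ := exists_embed
    exact hmp_separable e he _
  · intro G _ _ _ _
    constructor
    · intro hEA aX hcont
      letI := aX
      haveI := hcont
      exact hEA TestSpace
    · intro hfix
      intro Z _ _ _ _ _ _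
      by_contra hZfix
      push_neg at hZfix
      obtain ⟨f₀, hbad⟩ := exists_bad G hZfix
      set Y : TestIdx := ⟨Yset G f₀, Yset_compact G f₀, Yset_nonempty G f₀⟩ with hY
      have hone : ∀ x : TestSpace, Function.update x Y (act G f₀ 1 (x Y)) = x := by
        intro x
        rw [act_one, Function.update_eq_self]
      have hmul : ∀ (g h : G) (x : TestSpace),
          Function.update x Y (act G f₀ (g * h) (x Y)) =
          Function.update (Function.update x Y (act G f₀ h (x Y))) Y
            (act G f₀ g ((Function.update x Y (act G f₀ h (x Y))) Y)) := by
        intro g h x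
        rw [Function.update_self, Function.update_idem, act_mul]
      have hcont' : Continuous fun p : G × TestSpace =>
          Function.update p.2 Y (act G f₀ p.1 (p.2 Y)) := by
        refine Continuous.update continuous_snd Y ?_
        exact (act_continuous G f₀).comp
          (continuous_fst.prodMk ((continuous_apply Y).comp continuous_snd))
      letI actInst : MulAction G TestSpace :=
        { smul := fun g x => Function.update x Y (act G f₀ g (x Y))
          one_smul := hone
          mul_smul := hmul }
      have key := hfix actInst (@ContinuousSMul.mk G TestSpace actInst.toSMul _ _ hcont')
      obtain ⟨x, hx⟩ := key
      obtain ⟨g, hg⟩ := hbad (x Y)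
      apply hg
      have h2 : Function.update x Y (act G f₀ g (x Y)) = x := hx g
      calc act G f₀ g (x Y) = Function.update x Y (act G f₀ g (x Y)) Y :=
            (Function.update_self Y (act G f₀ g (x Y)) x).symm
        _ = x Y := by rw [h2]
end
end

section
/- For every Polish group G there exists a left-invariant pseudometric d on the free group F_∞ on countably many generators such that the subgroup H_d = {x ∈ F_∞ : d(x, e) = 0} is normal in F_∞ and G is topologically isomorphic to the completion of the quotient group F_∞/H_d with respect to the left-invariant metric induced by d. Consequently, there are at most 2^{ℵ₀} Polish groups up to topological group isomorphism. -/
open Filter Topology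

/-- A bundled Polish group. -/
structure PolishGrp where
  carrier : Type
  [grp : Group carrier]
  [top : TopologicalSpace carrier]
  [tgrp : IsTopologicalGroup carrier]
  [pol : PolishSpace carrier]

attribute [instance] PolishGrp.grp PolishGrp.top PolishGrp.tgrp PolishGrp.pol

/-- `d` is a left-invariant pseudometric on the free group `F_∞` on countably many
generators. -/
def IsLeftInvariantPseudoMetric (d : FreeGroup ℕ → FreeGroup ℕ → ℝ) : Prop :=
  (∀ x, d x x = 0) ∧ (∀ x y, 0 ≤ d x y) ∧ (∀ x y, d x y = d y x) ∧
    (∀ x y z, d x z ≤ d x y + d y z) ∧ (∀ z x y, d (z * x) (z * y) = d x y)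

section BK

variable {G : Type} [Group G] [TopologicalSpace G] [IsTopologicalGroup G]

lemma bk_step (U : Set G) (hU : U ∈ 𝓝 1) :
    ∃ W : Set G, W ∈ 𝓝 (1 : G) ∧ (∀ g ∈ W, g⁻¹ ∈ W) ∧
      ∀ a ∈ W, ∀ b ∈ W, ∀ c ∈ W, a * b * c ∈ U := by
  obtain ⟨V1, hV1, h1⟩ := exists_nhds_one_split hU
  obtain ⟨V2, hV2, h2⟩ := exists_nhds_one_split hV1
  have hW0n : V1 ∩ V2 ∈ 𝓝 (1 : G) := inter_mem hV1 hV2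
  have hW0inv : (fun g : G => g⁻¹) ⁻¹' (V1 ∩ V2) ∈ 𝓝 (1 : G) := by
    have h := (continuous_inv (G := G)).tendsto (1 : G)
    simp only [inv_one] at h
    exact h hW0n
  refine ⟨(V1 ∩ V2) ∩ (fun g : G => g⁻¹) ⁻¹' (V1 ∩ V2), inter_mem hW0n hW0inv, ?_, ?_⟩
  · rintro g ⟨hg1, hg2⟩
    exact ⟨hg2, by simpa using hg1⟩
  · rintro a ⟨⟨ha1, ha2⟩, -⟩ b ⟨⟨hb1, hb2⟩, -⟩ c ⟨⟨hc1, hc2⟩, -⟩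
    exact h1 _ (h2 _ ha2 _ hb2) _ hc1

variable (B : ℕ → Set G) (hB : ∀ n, B n ∈ 𝓝 (1 : G))

noncomputable def bkV : ℕ → {W : Set G // W ∈ 𝓝 (1 : G)} := fun n =>
  Nat.rec ⟨Set.univ, Filter.univ_mem⟩
    (fun n prev =>
      let h := bk_step (prev.1 ∩ B n) (Filter.inter_mem prev.2 (hB n))
      ⟨h.choose, h.choose_spec.1⟩) n

lemma bkV_zero : (bkV B hB 0).1 = Set.univ := rfl

lemma bkV_succ_spec (n : ℕ) :
    (∀ g ∈ (bkV B hB (n+1)).1, g⁻¹ ∈ (bkV B hB (n+1)).1) ∧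
      ∀ a ∈ (bkV B hB (n+1)).1, ∀ b ∈ (bkV B hB (n+1)).1, ∀ c ∈ (bkV B hB (n+1)).1,
        a * b * c ∈ (bkV B hB n).1 ∩ B n := by
  have h := (bk_step ((bkV B hB n).1 ∩ B n)
    (Filter.inter_mem (bkV B hB n).2 (hB n))).choose_spec
  exact ⟨h.2.1, h.2.2⟩

lemma bkV_one_mem (n : ℕ) : (1 : G) ∈ (bkV B hB n).1 := mem_of_mem_nhds (bkV B hB n).2

lemma bkV_symm (n : ℕ) : ∀ g ∈ (bkV B hB n).1, g⁻¹ ∈ (bkV B hB n).1 := by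
  cases n with
  | zero => intro g _; exact Set.mem_univ _
  | succ n => exact (bkV_succ_spec B hB n).1

lemma bkV_triple (n : ℕ) {a b c : G} (ha : a ∈ (bkV B hB (n+1)).1)
    (hb : b ∈ (bkV B hB (n+1)).1) (hc : c ∈ (bkV B hB (n+1)).1) :
    a * b * c ∈ (bkV B hB n).1 :=
  ((bkV_succ_spec B hB n).2 a ha b hb c hc).1

lemma bkV_succ_subset_B (n : ℕ) : (bkV B hB (n+1)).1 ⊆ B n := by
  intro a ha
  have := ((bkV_succ_spec B hB n).2 a ha 1 (bkV_one_mem B hB _) 1 (bkV_one_mem B hB _)).2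
  simpa using this

lemma bkV_succ_subset (n : ℕ) : (bkV B hB (n+1)).1 ⊆ (bkV B hB n).1 := by
  intro a ha
  have := bkV_triple B hB n ha (bkV_one_mem B hB _) (bkV_one_mem B hB _)
  simpa using this

lemma bkV_subset_of_le {m n : ℕ} (h : n ≤ m) : (bkV B hB m).1 ⊆ (bkV B hB n).1 := by
  induction m with
  | zero =>
    obtain rfl : n = 0 := Nat.le_zero.mp h
    exact subset_rfl
  | succ m ih =>
    rcases Nat.lt_or_ge n (m + 1) with h' | h'
    · exact fun a ha => ih (Nat.lt_succ_iff.mp h') (bkV_succ_subset B hB m ha)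
    · obtain rfl : n = m + 1 := le_antisymm h h'
      exact subset_rfl


noncomputable def bknrm (g : G) : ℝ :=
  sInf {r : ℝ | ∃ n : ℕ, g ∈ (bkV B hB n).1 ∧ r = (2:ℝ)⁻¹ ^ n}

lemma bknrm_set_nonempty (g : G) :
    {r : ℝ | ∃ n : ℕ, g ∈ (bkV B hB n).1 ∧ r = (2:ℝ)⁻¹ ^ n}.Nonempty :=
  ⟨1, 0, by simp [bkV_zero]⟩

lemma bknrm_set_bdd (g : G) :
    BddBelow {r : ℝ | ∃ n : ℕ, g ∈ (bkV B hB n).1 ∧ r = (2:ℝ)⁻¹ ^ n} := by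
  refine ⟨0, ?_⟩
  rintro r ⟨n, -, rfl⟩
  positivity

lemma bknrm_nonneg (g : G) : 0 ≤ bknrm B hB g := by
  apply le_csInf (bknrm_set_nonempty B hB g)
  rintro r ⟨n, -, rfl⟩
  positivity

lemma bknrm_le_of_mem {g : G} {n : ℕ} (h : g ∈ (bkV B hB n).1) :
    bknrm B hB g ≤ (2:ℝ)⁻¹ ^ n :=
  csInf_le (bknrm_set_bdd B hB g) ⟨n, h, rfl⟩

lemma bknrm_le_one (g : G) : bknrm B hB g ≤ 1 := by
  simpa using bknrm_le_of_mem B hB (n := 0) (by simp [bkV_zero])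

lemma mem_of_bknrm_lt {g : G} {n : ℕ} (h : bknrm B hB g < (2:ℝ)⁻¹ ^ n) :
    g ∈ (bkV B hB (n+1)).1 := by
  obtain ⟨r, hr, hlt⟩ := exists_lt_of_csInf_lt (bknrm_set_nonempty B hB g) h
  obtain ⟨m, hm, rfl⟩ := hr
  have hmn : n < m := by
    by_contra hc
    push_neg at hc
    exact absurd (pow_le_pow_of_le_one (by norm_num) (by norm_num) hc) (not_le.mpr hlt)
  exact bkV_subset_of_le B hB hmn hm

lemma bknrm_mem_all {g : G} (h : ∀ n, g ∈ (bkV B hB n).1) : bknrm B hB g = 0 := by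
  refine le_antisymm ?_ (bknrm_nonneg B hB g)
  refine le_of_forall_pos_le_add ?_
  intro ε hε
  obtain ⟨n, hn⟩ := exists_pow_lt_of_lt_one hε (by norm_num : (2:ℝ)⁻¹ < 1)
  calc bknrm B hB g ≤ (2:ℝ)⁻¹ ^ n := bknrm_le_of_mem B hB (h n)
    _ ≤ 0 + ε := by linarith

lemma bknrm_one : bknrm B hB (1 : G) = 0 :=
  bknrm_mem_all B hB (fun n => bkV_one_mem B hB n)

lemma bknrm_inv (g : G) : bknrm B hB g⁻¹ = bknrm B hB g := by
  have key : ∀ h : G, bknrm B hB h⁻¹ ≤ bknrm B hB h := by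
    intro h
    apply le_csInf (bknrm_set_nonempty B hB h)
    rintro r ⟨n, hn, rfl⟩
    exact bknrm_le_of_mem B hB (bkV_symm B hB n h hn)
  refine le_antisymm (key g) ?_
  have := key g⁻¹
  rwa [inv_inv] at this


lemma bk_prod_mem_all : ∀ (l : List G), (∀ a ∈ l, ∀ m, a ∈ (bkV B hB m).1) →
    ∀ m, l.prod ∈ (bkV B hB m).1 := by
  intro l
  induction l with
  | nil => intro _ m; simpa using bkV_one_mem B hB m
  | cons a t ih =>
    intro h m
    have ha : a ∈ (bkV B hB (m+1)).1 := h a List.mem_cons_self (m+1)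
    have ht : t.prod ∈ (bkV B hB (m+1)).1 :=
      ih (fun b hb => h b (List.mem_cons_of_mem a hb)) (m+1)
    have := bkV_triple B hB m ha ht (bkV_one_mem B hB (m+1))
    simpa [List.prod_cons] using this

lemma bk_split : ∀ (l : List G) (c : ℝ), 0 ≤ c → c < (l.map (bknrm B hB)).sum →
    ∃ l₁ b l₂, l = l₁ ++ b :: l₂ ∧ (l₁.map (bknrm B hB)).sum ≤ c ∧
      c < (l₁.map (bknrm B hB)).sum + bknrm B hB b := by
  intro l
  induction l with
  | nil => intro c hc h; simp at h; linarith
  | cons a t ih =>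
    intro c hc h
    by_cases hca : c < bknrm B hB a
    · exact ⟨[], a, t, by simp, by simpa using hc, by simpa using hca⟩
    · push_neg at hca
      have h' : c - bknrm B hB a < (t.map (bknrm B hB)).sum := by
        simp only [List.map_cons, List.sum_cons] at h
        linarith
      obtain ⟨l₁, b, l₂, rfl, h1, h2⟩ := ih (c - bknrm B hB a) (by linarith) h'
      refine ⟨a :: l₁, b, l₂, by simp, ?_, ?_⟩
      · simp only [List.map_cons, List.sum_cons]; linarith
      · simp only [List.map_cons, List.sum_cons]; linarith

lemma bk_sum_nonneg (l : List G) : 0 ≤ (l.map (bknrm B hB)).sum := by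
  apply List.sum_nonneg
  intro r hr
  obtain ⟨a, -, rfl⟩ := List.mem_map.mp hr
  exact bknrm_nonneg B hB a

lemma bk_prod_mem_of_sum_lt :
    ∀ (N : ℕ) (l : List G), l.length ≤ N → ∀ n : ℕ,
      (l.map (bknrm B hB)).sum < (2:ℝ)⁻¹ ^ n → l.prod ∈ (bkV B hB n).1 := by
  intro N
  induction N with
  | zero =>
    intro l hl n _
    have : l = [] := List.length_eq_zero_iff.mp (Nat.le_zero.mp hl)
    subst this
    simpa using bkV_one_mem B hB n
  | succ N ih =>
    intro l hl n hsum
    set s := (l.map (bknrm B hB)).sum with hs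
    rcases le_or_gt s 0 with hs0 | hs0
    · -- all norms are zero
      have hall : ∀ a ∈ l, ∀ m, a ∈ (bkV B hB m).1 := by
        intro a ha m
        have h0 : bknrm B hB a = 0 := by
          have h1 : bknrm B hB a ≤ (l.map (bknrm B hB)).sum :=
            List.single_le_sum (fun r hr => by
              obtain ⟨x, -, rfl⟩ := List.mem_map.mp hr
              exact bknrm_nonneg B hB x) _ (List.mem_map.mpr ⟨a, ha, rfl⟩)
          have := bknrm_nonneg B hB a
          linarith
        cases m with
        | zero => simp [bkV_zero]
        | succ m =>
          apply mem_of_bknrm_lt B hB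
          rw [h0]
          positivity
      exact bk_prod_mem_all B hB l hall n
    · obtain ⟨l₁, b, l₂, rfl, h1, h2⟩ := bk_split B hB l (s/2) (by linarith) (by rw [← hs]; linarith)
      have hsum_eq : s = (l₁.map (bknrm B hB)).sum + bknrm B hB b + (l₂.map (bknrm B hB)).sum := by
        rw [hs]; simp [List.sum_append]; ring
      have hl₁ : l₁.length ≤ N := by
        simp only [List.length_append, List.length_cons] at hl
        omega
      have hl₂ : l₂.length ≤ N := by
        simp only [List.length_append, List.length_cons] at hl
        omega
      have hhalf : s / 2 < (2:ℝ)⁻¹ ^ (n+1) := by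
        rw [pow_succ]
        have : (2:ℝ)⁻¹ ^ n * 2⁻¹ = (2:ℝ)⁻¹ ^ n / 2 := by ring
        rw [this]
        linarith
      have hp₁ : l₁.prod ∈ (bkV B hB (n+1)).1 := ih l₁ hl₁ (n+1) (lt_of_le_of_lt h1 hhalf)
      have hp₂ : l₂.prod ∈ (bkV B hB (n+1)).1 := by
        apply ih l₂ hl₂ (n+1)
        have h2' : (l₂.map (bknrm B hB)).sum < s / 2 := by
          have hb := bknrm_nonneg B hB b
          linarith [hsum_eq]
        linarith
      have hb : b ∈ (bkV B hB (n+1)).1 := by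
        apply mem_of_bknrm_lt B hB
        have hl₂nn := bk_sum_nonneg B hB l₂
        have hl₁nn := bk_sum_nonneg B hB l₁
        calc bknrm B hB b ≤ s := by linarith [hsum_eq]
          _ < (2:ℝ)⁻¹ ^ n := hsum
      have := bkV_triple B hB n hp₁ hb hp₂
      simpa [List.prod_append, List.prod_cons, mul_assoc] using this

lemma bknrm_prod_le (l : List G) :
    bknrm B hB l.prod ≤ 2 * (l.map (bknrm B hB)).sum := by
  set s := (l.map (bknrm B hB)).sum with hs
  have hs0 : 0 ≤ s := bk_sum_nonneg B hB l
  rcases eq_or_lt_of_le hs0 with hz | hpos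
  · -- s = 0
    have hmem : ∀ n, l.prod ∈ (bkV B hB n).1 := by
      intro n
      apply bk_prod_mem_of_sum_lt B hB l.length l le_rfl n
      rw [← hs, ← hz]
      positivity
    rw [bknrm_mem_all B hB hmem, ← hz]
    norm_num
  · rcases le_or_gt (1/2 : ℝ) s with hbig | hsmall
    · calc bknrm B hB l.prod ≤ 1 := bknrm_le_one B hB _
        _ ≤ 2 * s := by linarith
    · have hex : ∃ m : ℕ, (2:ℝ)⁻¹ ^ m ≤ s := by
        obtain ⟨m, hm⟩ := exists_pow_lt_of_lt_one hpos (by norm_num : (2:ℝ)⁻¹ < 1)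
        exact ⟨m, le_of_lt hm⟩
      classical
      have hm₀spec : (2:ℝ)⁻¹ ^ (Nat.find hex) ≤ s := Nat.find_spec hex
      have hm₀pos : Nat.find hex ≠ 0 := by
        intro h0
        rw [h0] at hm₀spec
        simp at hm₀spec
        linarith
      obtain ⟨n, hmn⟩ := Nat.exists_eq_succ_of_ne_zero hm₀pos
      have hspec : (2:ℝ)⁻¹ ^ (n+1) ≤ s := by
        rw [show n + 1 = Nat.find hex from hmn.symm]
        exact hm₀spec
      have hn : s < (2:ℝ)⁻¹ ^ n := by
        have hmin := Nat.find_min hex (m := n) (by omega)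
        push_neg at hmin
        exact hmin
      have hmem : l.prod ∈ (bkV B hB n).1 :=
        bk_prod_mem_of_sum_lt B hB l.length l le_rfl n (by rw [← hs]; exact hn)
      calc bknrm B hB l.prod ≤ (2:ℝ)⁻¹ ^ n := bknrm_le_of_mem B hB hmem
        _ = 2 * (2:ℝ)⁻¹ ^ (n+1) := by ring
        _ ≤ 2 * s := by linarith [hspec]


noncomputable def bkd (g h : G) : ℝ :=
  sInf {r : ℝ | ∃ l : List G, l.prod = g⁻¹ * h ∧ r = (l.map (bknrm B hB)).sum}

lemma bkd_set_nonempty (g h : G) :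
    {r : ℝ | ∃ l : List G, l.prod = g⁻¹ * h ∧ r = (l.map (bknrm B hB)).sum}.Nonempty :=
  ⟨bknrm B hB (g⁻¹ * h), [g⁻¹ * h], by simp⟩

lemma bkd_set_bdd (g h : G) :
    BddBelow {r : ℝ | ∃ l : List G, l.prod = g⁻¹ * h ∧ r = (l.map (bknrm B hB)).sum} := by
  refine ⟨0, ?_⟩
  rintro r ⟨l, -, rfl⟩
  exact bk_sum_nonneg B hB l

lemma bkd_nonneg (g h : G) : 0 ≤ bkd B hB g h := by
  apply le_csInf (bkd_set_nonempty B hB g h)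
  rintro r ⟨l, -, rfl⟩
  exact bk_sum_nonneg B hB l

lemma bkd_le_bknrm (g h : G) : bkd B hB g h ≤ bknrm B hB (g⁻¹ * h) :=
  csInf_le (bkd_set_bdd B hB g h) ⟨[g⁻¹ * h], by simp⟩

lemma bkd_self (g : G) : bkd B hB g g = 0 := by
  refine le_antisymm ?_ (bkd_nonneg B hB g g)
  have : (0:ℝ) ∈ {r : ℝ | ∃ l : List G, l.prod = g⁻¹ * g ∧ r = (l.map (bknrm B hB)).sum} :=
    ⟨[], by simp⟩
  exact csInf_le (bkd_set_bdd B hB g g) this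

lemma bknrm_le_two_bkd (g h : G) : bknrm B hB (g⁻¹ * h) ≤ 2 * bkd B hB g h := by
  have key : bknrm B hB (g⁻¹ * h) / 2 ≤ bkd B hB g h := by
    apply le_csInf (bkd_set_nonempty B hB g h)
    rintro r ⟨l, hl, rfl⟩
    have := bknrm_prod_le B hB l
    rw [hl] at this
    linarith
  linarith

lemma bkd_comm (g h : G) : bkd B hB g h = bkd B hB h g := by
  have key : ∀ a b : G, bkd B hB a b ≤ bkd B hB b a := by
    intro a b
    apply le_csInf (bkd_set_nonempty B hB b a)
    rintro r ⟨l, hl, rfl⟩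
    have hprod : ((l.map fun x => x⁻¹).reverse).prod = a⁻¹ * b := by
      rw [← List.prod_inv_reverse, hl, mul_inv_rev, inv_inv]
    have hsum : (((l.map fun x => x⁻¹).reverse).map (bknrm B hB)).sum
        = (l.map (bknrm B hB)).sum := by
      rw [List.map_reverse, List.sum_reverse, List.map_map]
      congr 1
      apply List.map_congr_left
      intro a _
      simp [Function.comp, bknrm_inv B hB]
    exact csInf_le (bkd_set_bdd B hB a b) ⟨(l.map fun x => x⁻¹).reverse, hprod, hsum.symm⟩
  exact le_antisymm (key g h) (key h g)

lemma bkd_triangle (g h k : G) : bkd B hB g k ≤ bkd B hB g h + bkd B hB h k := by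
  refine le_of_forall_pos_le_add ?_
  intro ε hε
  obtain ⟨r₁, ⟨l₁, hl₁, rfl⟩, hr₁⟩ :=
    Real.lt_sInf_add_pos (bkd_set_nonempty B hB g h) (half_pos hε)
  obtain ⟨r₂, ⟨l₂, hl₂, rfl⟩, hr₂⟩ :=
    Real.lt_sInf_add_pos (bkd_set_nonempty B hB h k) (half_pos hε)
  have hmem : ((l₁ ++ l₂).map (bknrm B hB)).sum ∈
      {r : ℝ | ∃ l : List G, l.prod = g⁻¹ * k ∧ r = (l.map (bknrm B hB)).sum} := by
    refine ⟨l₁ ++ l₂, ?_, rfl⟩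
    rw [List.prod_append, hl₁, hl₂]
    group
  have hle := csInf_le (bkd_set_bdd B hB g k) hmem
  rw [List.map_append, List.sum_append] at hle
  calc bkd B hB g k ≤ (l₁.map (bknrm B hB)).sum + (l₂.map (bknrm B hB)).sum := hle
    _ ≤ (bkd B hB g h + ε/2) + (bkd B hB h k + ε/2) := by
        unfold bkd
        linarith
    _ = bkd B hB g h + bkd B hB h k + ε := by ring

lemma bkd_left_invariant (z g h : G) : bkd B hB (z * g) (z * h) = bkd B hB g h := by
  unfold bkd
  congr 1
  ext r
  constructor <;> (rintro ⟨l, hl, rfl⟩; refine ⟨l, ?_, rfl⟩)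
  · rw [hl]; group
  · rw [hl]; group

lemma bkd_eq_zero_iff (hBsep : ∀ g : G, (∀ n, g ∈ B n) → g = 1) (g h : G) :
    bkd B hB g h = 0 ↔ g = h := by
  constructor
  · intro h0
    have hn : bknrm B hB (g⁻¹ * h) = 0 := by
      have h1 := bknrm_le_two_bkd B hB g h
      rw [h0] at h1
      have h2 := bknrm_nonneg B hB (g⁻¹ * h)
      linarith
    have hmem : ∀ n, g⁻¹ * h ∈ B n := by
      intro n
      have : bknrm B hB (g⁻¹ * h) < (2:ℝ)⁻¹ ^ (n+1) := by rw [hn]; positivity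
      exact bkV_succ_subset_B B hB n
        (bkV_subset_of_le B hB (by omega) (mem_of_bknrm_lt B hB this))
    have h1 := hBsep _ hmem
    have : g * (g⁻¹ * h) = g * 1 := by rw [h1]
    simpa [mul_assoc] using this.symm
  · rintro rfl
    exact bkd_self B hB g

end BK

section PartOne

variable (G : Type) [Group G] [TopologicalSpace G] [IsTopologicalGroup G] [PolishSpace G]

lemma exists_bk_basis :
    ∃ B : ℕ → Set G, (∀ n, B n ∈ 𝓝 (1 : G)) ∧ (∀ U ∈ 𝓝 (1 : G), ∃ n, B n ⊆ U) ∧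
      (∀ g : G, (∀ n, g ∈ B n) → g = 1) := by
  letI := TopologicalSpace.upgradeIsCompletelyMetrizable G
  refine ⟨fun n => Metric.ball (1 : G) (1 / (n + 1)),
    fun n => Metric.ball_mem_nhds _ (by positivity), ?_, ?_⟩
  · intro U hU
    obtain ⟨ε, hε, hsub⟩ := Metric.mem_nhds_iff.mp hU
    obtain ⟨n, hn⟩ := exists_nat_one_div_lt hε
    refine ⟨n, fun x hx => hsub ?_⟩
    have hx' : dist x (1 : G) < 1 / (n + 1) := hx
    exact Metric.mem_ball.mpr (lt_trans hx' hn)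
  · intro g hg
    have hdist : dist g (1 : G) = 0 := by
      refine le_antisymm (le_of_forall_pos_le_add ?_) dist_nonneg
      intro ε hε
      obtain ⟨n, hn⟩ := exists_nat_one_div_lt hε
      have : dist g (1 : G) < 1 / (n + 1) := hg n
      linarith
    exact dist_eq_zero.mp hdist

lemma part_one :
    ∃ d : FreeGroup ℕ → FreeGroup ℕ → ℝ, IsLeftInvariantPseudoMetric d ∧
      (∃ H : Subgroup (FreeGroup ℕ),
        (H : Set (FreeGroup ℕ)) = {x : FreeGroup ℕ | d x 1 = 0} ∧ H.Normal) ∧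
      ∃ φ : FreeGroup ℕ →* G,
        DenseRange φ ∧
        (∀ x y : FreeGroup ℕ, d x y = 0 ↔ φ x = φ y) ∧
        (∀ ε : ℝ, 0 < ε → ∃ U ∈ 𝓝 (1 : G), ∀ x : FreeGroup ℕ, φ x ∈ U → d x 1 < ε) ∧
        (∀ U ∈ 𝓝 (1 : G), ∃ ε : ℝ, 0 < ε ∧ ∀ x : FreeGroup ℕ, d x 1 < ε → φ x ∈ U) := by
  obtain ⟨B, hB, hBbasis, hBsep⟩ := exists_bk_basis G
  haveI : Nonempty G := ⟨1⟩
  set u : ℕ → G := TopologicalSpace.denseSeq G with hu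
  have hud : DenseRange u := TopologicalSpace.denseRange_denseSeq G
  set φ : FreeGroup ℕ →* G := FreeGroup.lift u with hφ
  have hφd : DenseRange φ := by
    apply Dense.mono _ hud
    rintro _ ⟨n, rfl⟩
    exact ⟨FreeGroup.of n, FreeGroup.lift_apply_of⟩
  set d : FreeGroup ℕ → FreeGroup ℕ → ℝ := fun x y => bkd B hB (φ x) (φ y) with hd
  have hzero : ∀ x y, d x y = 0 ↔ φ x = φ y := fun x y => bkd_eq_zero_iff B hB hBsep _ _
  refine ⟨d, ⟨fun x => bkd_self B hB _, fun x y => bkd_nonneg B hB _ _,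
    fun x y => bkd_comm B hB _ _, fun x y z => bkd_triangle B hB _ _ _, ?_⟩, ?_, φ, hφd,
    hzero, ?_, ?_⟩
  · intro z x y
    simp only [hd, map_mul]
    exact bkd_left_invariant B hB _ _ _
  · refine ⟨φ.ker, ?_, MonoidHom.normal_ker φ⟩
    ext x
    simp only [SetLike.mem_coe, MonoidHom.mem_ker, Set.mem_setOf_eq]
    rw [hzero x 1, map_one]
  · intro ε hε
    obtain ⟨n, hn⟩ := exists_pow_lt_of_lt_one hε (by norm_num : (2:ℝ)⁻¹ < 1)
    refine ⟨(bkV B hB n).1, (bkV B hB n).2, fun x hx => ?_⟩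
    have h1 : d x 1 ≤ bknrm B hB ((φ x)⁻¹ * φ 1) := bkd_le_bknrm B hB _ _
    have h2 : bknrm B hB ((φ x)⁻¹ * φ 1) = bknrm B hB (φ x) := by
      rw [map_one, mul_one, bknrm_inv]
    calc d x 1 ≤ bknrm B hB (φ x) := by rw [← h2]; exact h1
      _ ≤ (2:ℝ)⁻¹ ^ n := bknrm_le_of_mem B hB hx
      _ < ε := hn
  · intro U hU
    obtain ⟨n, hn⟩ := hBbasis U hU
    refine ⟨(2:ℝ)⁻¹ ^ (n + 2), by positivity, fun x hx => ?_⟩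
    have h1 : bknrm B hB ((φ x)⁻¹ * φ 1) ≤ 2 * d x 1 := bknrm_le_two_bkd B hB _ _
    have h2 : bknrm B hB ((φ x)⁻¹ * φ 1) = bknrm B hB (φ x) := by
      rw [map_one, mul_one, bknrm_inv]
    have h3 : bknrm B hB (φ x) < (2:ℝ)⁻¹ ^ (n + 1) := by
      rw [← h2]
      calc bknrm B hB ((φ x)⁻¹ * φ 1) ≤ 2 * d x 1 := h1
        _ < 2 * (2:ℝ)⁻¹ ^ (n + 2) := by linarith
        _ = (2:ℝ)⁻¹ ^ (n + 1) := by ring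
    have h4 : φ x ∈ (bkV B hB (n + 2)).1 := mem_of_bknrm_lt B hB h3
    exact hn (bkV_succ_subset_B B hB n (bkV_succ_subset B hB (n + 1) h4))

end PartOne



lemma polish_unique {ι G H : Type} [Group G] [MetricSpace G] [IsTopologicalGroup G] [CompleteSpace G]
    [Group H] [MetricSpace H] [IsTopologicalGroup H] [CompleteSpace H]
    (u : ι → G) (v : ι → H) (hu : DenseRange u) (hv : DenseRange v)
    (hdist : ∀ k l, dist (u k) (u l) = dist (v k) (v l))
    (m : ι → ι → ι) (hmu : ∀ k l, u (m k l) = u k * u l) (hmv : ∀ k l, v (m k l) = v k * v l) :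
    ∃ e : G ≃* H, Continuous e ∧ Continuous e.symm := by
  letI : PseudoMetricSpace ι :=
    { dist := fun k l => dist (u k) (u l)
      dist_self := fun k => dist_self _
      dist_comm := fun k l => dist_comm _ _
      dist_triangle := fun k l j => dist_triangle _ _ _ }
  have isomu : Isometry u := Isometry.of_dist_eq (fun a b => rfl)
  have isomv : Isometry v := Isometry.of_dist_eq (fun a b => (hdist a b).symm)
  have ui : IsUniformInducing u := isomu.isUniformInducing
  have vi : IsUniformInducing v := isomv.isUniformInducing
  have di : IsDenseInducing u := ui.isDenseInducing hu
  have dj : IsDenseInducing v := vi.isDenseInducing hv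
  have he0c : Continuous (di.extend v) :=
    (uniformContinuous_uniformly_extend ui hu isomv.uniformContinuous).continuous
  have he1c : Continuous (dj.extend u) :=
    (uniformContinuous_uniformly_extend vi hv isomu.uniformContinuous).continuous
  have he0eq : ∀ k, di.extend v (u k) = v k :=
    fun k => uniformly_extend_of_ind ui hu isomv.uniformContinuous k
  have he1eq : ∀ k, dj.extend u (v k) = u k :=
    fun k => uniformly_extend_of_ind vi hv isomu.uniformContinuous k
  have hleft : dj.extend u ∘ di.extend v = id := by
    apply Continuous.ext_on (s := Set.range u) hu (he1c.comp he0c) continuous_id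
    rintro _ ⟨k, rfl⟩
    simp [he0eq k, he1eq k]
  have hright : di.extend v ∘ dj.extend u = id := by
    apply Continuous.ext_on (s := Set.range v) hv (he0c.comp he1c) continuous_id
    rintro _ ⟨k, rfl⟩
    simp [he1eq k, he0eq k]
  have hmul : ∀ x y : G, di.extend v (x * y) = di.extend v x * di.extend v y := by
    have key : (fun p : G × G => di.extend v (p.1 * p.2)) =
        (fun p : G × G => di.extend v p.1 * di.extend v p.2) := by
      apply Continuous.ext_on (s := Set.range (Prod.map u u)) (hu.prodMap hu)
      · exact he0c.comp continuous_mul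
      · exact (he0c.comp continuous_fst).mul (he0c.comp continuous_snd)
      · rintro _ ⟨⟨k, l⟩, rfl⟩
        simp only [Prod.map_apply]
        rw [← hmu k l, he0eq, he0eq, he0eq, hmv]
    exact fun x y => congrFun key (x, y)
  refine ⟨{ toFun := di.extend v, invFun := dj.extend u,
            left_inv := fun x => congrFun hleft x,
            right_inv := fun y => congrFun hright y,
            map_mul' := hmul }, he0c, he1c⟩

instance : IsTopologicalGroup Unit :=
  { continuous_mul := continuous_of_discreteTopology
    continuous_inv := continuous_of_discreteTopology }

def PolishCode (P : PolishGrp) (i : (ℕ → ℕ → ℕ) × (ℕ → ℕ → ℝ)) : Prop :=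
  ∃ ms : MetricSpace P.carrier,
    ms.toUniformSpace.toTopologicalSpace = P.top ∧
    @CompleteSpace P.carrier ms.toUniformSpace ∧
    ∃ u : ℕ → P.carrier, DenseRange u ∧
      (∀ k l, u (i.1 k l) = u k * u l) ∧
      (∀ k l, @dist _ ms.toDist (u k) (u l) = i.2 k l)

open Classical in
noncomputable def FF : (ℕ → ℕ → ℕ) × (ℕ → ℕ → ℝ) → PolishGrp := fun i =>
  if h : ∃ P : PolishGrp, PolishCode P i then h.choose else PolishGrp.mk Unit

lemma FF_spec {i : (ℕ → ℕ → ℕ) × (ℕ → ℕ → ℝ)} (h : ∃ P : PolishGrp, PolishCode P i) :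
    PolishCode (FF i) i := by
  rw [FF, dif_pos h]
  exact h.choose_spec

lemma code_unique {P Q : PolishGrp} {i : (ℕ → ℕ → ℕ) × (ℕ → ℕ → ℝ)}
    (hP : PolishCode P i) (hQ : PolishCode Q i) :
    ∃ e : P.carrier ≃* Q.carrier, Continuous e ∧ Continuous e.symm := by
  obtain ⟨msP, hmsP, hcomP, u, hu, hmu, hdu⟩ := hP
  obtain ⟨msQ, hmsQ, hcomQ, v, hv, hmv, hdv⟩ := hQ
  letI mP : MetricSpace P.carrier := msP.replaceTopology hmsP.symm
  letI mQ : MetricSpace Q.carrier := msQ.replaceTopology hmsQ.symm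
  have hmPe : mP = msP := MetricSpace.replaceTopology_eq _ _
  have hmQe : mQ = msQ := MetricSpace.replaceTopology_eq _ _
  haveI : @CompleteSpace P.carrier mP.toUniformSpace := by rw [hmPe]; exact hcomP
  haveI : @CompleteSpace Q.carrier mQ.toUniformSpace := by rw [hmQe]; exact hcomQ
  have hdist : ∀ k l, dist (u k) (u l) = dist (v k) (v l) := by
    intro k l
    have h1 : dist (u k) (u l) = @dist _ msP.toDist (u k) (u l) := by rw [← hmPe]
    have h2 : dist (v k) (v l) = @dist _ msQ.toDist (v k) (v l) := by rw [← hmQe]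
    rw [h1, h2, hdu k l, hdv k l]
  exact polish_unique u v hu hv hdist i.1 hmu hmv

lemma exists_good_seq (G : Type) [Group G] [TopologicalSpace G] [IsTopologicalGroup G]
    [PolishSpace G] :
    ∃ u : ℕ → G, DenseRange u ∧ ∀ k l : ℕ, ∃ j, u j = u k * u l := by
  obtain ⟨s, hsc, hsd⟩ := TopologicalSpace.exists_countable_dense G
  haveI := hsc.to_subtype
  have hcount : ((Subgroup.closure s : Subgroup G) : Set G).Countable := by
    have hsur : Function.Surjective (FreeGroup.mk : List (↥s × Bool) → FreeGroup ↥s) :=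
      fun x => Quot.exists_rep x
    haveI : Countable (FreeGroup ↥s) := hsur.countable
    have heq : ((Subgroup.closure s : Subgroup G) : Set G)
        = Set.range (FreeGroup.lift (Subtype.val : s → G)) := by
      rw [← MonoidHom.coe_range, FreeGroup.range_lift_eq_closure, Subtype.range_coe]
    rw [heq]
    exact Set.countable_range _
  have hdense : Dense ((Subgroup.closure s : Subgroup G) : Set G) :=
    hsd.mono Subgroup.subset_closure
  obtain ⟨u, hurange⟩ := hcount.exists_eq_range ⟨1, (Subgroup.closure s).one_mem⟩
  refine ⟨u, ?_, ?_⟩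
  · rw [DenseRange, ← hurange]
    exact hdense
  · intro k l
    have hk : u k ∈ ((Subgroup.closure s : Subgroup G) : Set G) := by
      rw [hurange]; exact Set.mem_range_self k
    have hl : u l ∈ ((Subgroup.closure s : Subgroup G) : Set G) := by
      rw [hurange]; exact Set.mem_range_self l
    have hm : u k * u l ∈ ((Subgroup.closure s : Subgroup G) : Set G) :=
      mul_mem hk hl
    rw [hurange] at hm
    obtain ⟨j, hj⟩ := hm
    exact ⟨j, hj⟩

lemma card_codes : Cardinal.mk ((ℕ → ℕ → ℕ) × (ℕ → ℕ → ℝ)) ≤ Cardinal.continuum := by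
  have e1 : (ℕ → ℕ → ℕ) ≃ (ℕ × ℕ → ℕ) := (Equiv.curry ℕ ℕ ℕ).symm
  have e2 : (ℕ → ℕ → ℝ) ≃ (ℕ × ℕ → ℝ) := (Equiv.curry ℕ ℕ ℝ).symm
  have h1 : Cardinal.mk (ℕ → ℕ → ℕ) = Cardinal.continuum := by
    rw [Cardinal.mk_congr e1, Cardinal.mk_arrow]
    simp [Cardinal.mk_eq_aleph0, Cardinal.aleph0_power_aleph0]
  have h2 : Cardinal.mk (ℕ → ℕ → ℝ) = Cardinal.continuum := by
    rw [Cardinal.mk_congr e2, Cardinal.mk_arrow]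
    simp [Cardinal.mk_eq_aleph0, Cardinal.mk_real, Cardinal.continuum_power_aleph0]
  rw [Cardinal.mk_prod, Cardinal.lift_id, Cardinal.lift_id, h1, h2,
    Cardinal.mul_eq_self Cardinal.aleph0_le_continuum]

lemma part_two :
    ∃ (ι : Type) (F : ι → PolishGrp), Cardinal.mk ι ≤ Cardinal.continuum ∧
      ∀ (G : Type) [Group G] [TopologicalSpace G] [IsTopologicalGroup G] [PolishSpace G],
        ∃ (i : ι) (e : G ≃* (F i).carrier), Continuous e ∧ Continuous e.symm := by
  refine ⟨(ℕ → ℕ → ℕ) × (ℕ → ℕ → ℝ), FF, card_codes, ?_⟩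
  intro G _ _ _ _
  obtain ⟨u, hu, hmul⟩ := exists_good_seq G
  obtain ⟨ms, hms, hcompl⟩ := (inferInstance : PolishSpace G).complete
  set m : ℕ → ℕ → ℕ := fun k l => (hmul k l).choose with hm
  have hmspec : ∀ k l, u (m k l) = u k * u l := fun k l => (hmul k l).choose_spec
  set δ : ℕ → ℕ → ℝ := fun k l => @dist _ ms.toDist (u k) (u l) with hδ
  set i : (ℕ → ℕ → ℕ) × (ℕ → ℕ → ℝ) := (m, δ) with hi
  have hcodeG : PolishCode (PolishGrp.mk G) i :=
    ⟨ms, hms, hcompl, u, hu, hmspec, fun k l => rfl⟩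
  have hex : ∃ P : PolishGrp, PolishCode P i := ⟨PolishGrp.mk G, hcodeG⟩
  obtain ⟨e, he, he'⟩ := code_unique hcodeG (FF_spec hex)
  exact ⟨i, e, he, he'⟩

/-- Every Polish group `G` arises from a left-invariant pseudometric `d` on `F_∞`: the
subgroup `H_d = {x : d(x,e) = 0}` is normal, and `G` is (topologically isomorphic to) the
completion of the quotient metric group `F_∞/H_d`.  The latter is expressed by a
homomorphism `φ : F_∞ →* G` with dense range whose kernel is exactly `H_d`, which is
isometric for `d` (i.e. `d x y = 0 ↔ φ x = φ y`, and `d` induces the topology of `G` on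
the image); `G`, being Polish, is the completion of this dense metric subgroup.
Consequently there are at most `2^ℵ₀` Polish groups up to topological isomorphism. -/
theorem polish_group_is_completion_of_free_group_quotient :
    (∀ (G : Type) [Group G] [TopologicalSpace G] [IsTopologicalGroup G] [PolishSpace G],
      ∃ d : FreeGroup ℕ → FreeGroup ℕ → ℝ, IsLeftInvariantPseudoMetric d ∧
        (∃ H : Subgroup (FreeGroup ℕ),
          (H : Set (FreeGroup ℕ)) = {x : FreeGroup ℕ | d x 1 = 0} ∧ H.Normal) ∧
        ∃ φ : FreeGroup ℕ →* G,
          DenseRange φ ∧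
          (∀ x y : FreeGroup ℕ, d x y = 0 ↔ φ x = φ y) ∧
          (∀ ε : ℝ, 0 < ε → ∃ U ∈ 𝓝 (1 : G), ∀ x : FreeGroup ℕ, φ x ∈ U → d x 1 < ε) ∧
          (∀ U ∈ 𝓝 (1 : G), ∃ ε : ℝ, 0 < ε ∧ ∀ x : FreeGroup ℕ, d x 1 < ε → φ x ∈ U)) ∧
    (∃ (ι : Type) (F : ι → PolishGrp), Cardinal.mk ι ≤ Cardinal.continuum ∧
      ∀ (G : Type) [Group G] [TopologicalSpace G] [IsTopologicalGroup G] [PolishSpace G],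
        ∃ (i : ι) (e : G ≃* (F i).carrier), Continuous e ∧ Continuous e.symm) := by
  constructor
  · intro G _ _ _ _
    exact part_one G
  · exact part_two
end
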